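/- arXiv:1609.02964 — 3 statements merged into one kernel-verified Lean document; each statement's English description precedes it below -/
import Mathlib

section
/- Sup-norm interpolation inequality (inequality (5.8), used from Lee's work): For every q ≥ 1 there is a constant C_q such that for all real numbers a < b, every continuously differentiable function g : [a,b] → ℂ, and every μ > 0, one has sup_{t ∈ [a,b]} |g(t)| ≤ C_q ( |g(a)| + μ^{1/q − 1} ‖g'‖_{L^q([a,b])} + μ^{1/q} ‖g‖_{L^q([a,b])} ). -/
open MeasureTheory intervalIntegral

/-- Hölder inequality on an interval: `∫ h ≤ (d-c)^(1-1/q) * (∫ h^q)^(1/q)`. -/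
lemma holder_interval_aux {q c d : ℝ} (hq : 1 ≤ q) (hcd : c ≤ d) {h : ℝ → ℝ}
    (hcont : ContinuousOn h (Set.Icc c d)) (hpos : ∀ s ∈ Set.Icc c d, 0 ≤ h s) :
    ∫ s in c..d, h s ≤ (d - c) ^ (1 - 1 / q) * (∫ s in c..d, h s ^ q) ^ (1 / q) := by
  rcases eq_or_lt_of_le hq with h1 | h1
  · subst h1
    simp only [one_div, inv_one, Real.rpow_one, sub_self, Real.rpow_zero, one_mul, le_refl]
  · -- q > 1
    set ν : Measure ℝ := volume.restrict (Set.Icc c d) with hν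
    haveI : IsFiniteMeasure ν := by
      constructor
      rw [hν, Measure.restrict_apply_univ, Real.volume_Icc]
      exact ENNReal.ofReal_lt_top
    have hpq : q.HolderConjugate q.conjExponent := Real.HolderConjugate.conjExponent h1
    -- Memℒp conditions
    have hm : AEStronglyMeasurable h ν := hcont.aestronglyMeasurable measurableSet_Icc
    obtain ⟨M, hM⟩ := isCompact_Icc.exists_bound_of_continuousOn hcont
    have hmem : MemLp h (ENNReal.ofReal q) ν := by
      refine MemLp.of_bound hm M ?_
      filter_upwards [ae_restrict_mem measurableSet_Icc] with x hx using hM x hx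
    have hmem1 : MemLp (fun _ : ℝ => (1 : ℝ)) (ENNReal.ofReal q.conjExponent) ν :=
      memLp_const 1
    have hae : 0 ≤ᵐ[ν] h := by
      filter_upwards [ae_restrict_mem measurableSet_Icc] with x hx using hpos x hx
    have hae1 : 0 ≤ᵐ[ν] (fun _ : ℝ => (1 : ℝ)) :=
      Filter.Eventually.of_forall fun _ => zero_le_one
    have key := MeasureTheory.integral_mul_le_Lp_mul_Lq_of_nonneg hpq hae hae1 hmem hmem1
    simp only [mul_one, Real.one_rpow] at key
    have hconst : ∫ _ : ℝ, (1 : ℝ) ∂ν = d - c := by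
      rw [MeasureTheory.integral_const, smul_eq_mul, mul_one, hν, measureReal_def, Measure.restrict_apply_univ,
        Real.volume_Icc, ENNReal.toReal_ofReal (sub_nonneg.2 hcd)]
    rw [hconst] at key
    have hconv : ∀ f : ℝ → ℝ, ∫ s in c..d, f s = ∫ s, f s ∂ν := by
      intro f
      rw [intervalIntegral.integral_of_le hcd, hν, ← MeasureTheory.integral_Icc_eq_integral_Ioc]
    rw [hconv h, hconv (fun s => h s ^ q)]
    have hexp : 1 - 1 / q = 1 / q.conjExponent := by
      rw [one_div, one_div, hpq.one_sub_inv]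
    rw [hexp, mul_comm]
    exact key

/-- If `g` is `C^1` on `[a,b]` and `[c,d] ⊆ [a,b]`, then for `s, t ∈ [c,d]` we have
`‖g t‖ ≤ ‖g s‖ + ∫_c^d ‖g'‖`. -/
lemma base_bound_aux {a b : ℝ} (hab : a < b) {g : ℝ → ℂ}
    (hg : ContDiffOn ℝ 1 g (Set.Icc a b)) {c d : ℝ} (hac : a ≤ c) (hcd : c ≤ d) (hdb : d ≤ b)
    {s t : ℝ} (hs : s ∈ Set.Icc c d) (ht : t ∈ Set.Icc c d) :
    ‖g t‖ ≤ ‖g s‖ + ∫ u in c..d, ‖derivWithin g (Set.Icc a b) u‖ := by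
  set D := derivWithin g (Set.Icc a b) with hD
  have hsub : Set.Icc c d ⊆ Set.Icc a b := Set.Icc_subset_Icc hac hdb
  have hDc : ContinuousOn D (Set.Icc a b) :=
    hg.continuousOn_derivWithin (uniqueDiffOn_Icc hab) le_rfl
  have hDnc : ContinuousOn (fun u => ‖D u‖) (Set.Icc c d) := (hDc.mono hsub).norm
  have hDint : IntervalIntegrable (fun u => ‖D u‖) volume c d :=
    hDnc.intervalIntegrable_of_Icc hcd
  have key : ∀ x y : ℝ, x ∈ Set.Icc c d → y ∈ Set.Icc c d → x ≤ y →
      g y - g x = ∫ u in x..y, D u := by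
    intro x y hx hy hxy
    have hsub' : Set.Icc x y ⊆ Set.Icc a b :=
      Set.Icc_subset_Icc (hac.trans hx.1) (hy.2.trans hdb)
    refine (intervalIntegral.integral_eq_sub_of_hasDeriv_right_of_le hxy
      (hg.continuousOn.mono hsub') (fun z hz => ?_)
      ((hDc.mono hsub').intervalIntegrable_of_Icc hxy)).symm
    have hz' : z ∈ Set.Ioo a b :=
      ⟨lt_of_le_of_lt (hac.trans hx.1) hz.1, lt_of_lt_of_le hz.2 (hy.2.trans hdb)⟩
    have hdiff := (hg.differentiableOn one_ne_zero) z (Set.Ioo_subset_Icc_self hz')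
    exact ((hdiff.hasDerivWithinAt).hasDerivAt (Icc_mem_nhds hz'.1 hz'.2)).hasDerivWithinAt
  have main : ∀ x y : ℝ, x ∈ Set.Icc c d → y ∈ Set.Icc c d → x ≤ y →
      ‖g y - g x‖ ≤ ∫ u in c..d, ‖D u‖ := by
    intro x y hx hy hxy
    rw [key x y hx hy hxy]
    calc ‖∫ u in x..y, D u‖ ≤ ∫ u in x..y, ‖D u‖ :=
          intervalIntegral.norm_integral_le_integral_norm hxy
      _ ≤ ∫ u in c..d, ‖D u‖ := by
          refine intervalIntegral.integral_mono_interval hx.1 hxy hy.2 ?_ hDint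
          exact Filter.Eventually.of_forall fun u => norm_nonneg _
  rcases le_total s t with hst | hst
  · have := main s t hs ht hst
    calc ‖g t‖ = ‖g s + (g t - g s)‖ := by ring_nf
      _ ≤ ‖g s‖ + ‖g t - g s‖ := norm_add_le _ _
      _ ≤ ‖g s‖ + ∫ u in c..d, ‖D u‖ := by linarith
  · have := main t s ht hs hst
    rw [norm_sub_rev] at this
    calc ‖g t‖ = ‖g s + (g t - g s)‖ := by ring_nf
      _ ≤ ‖g s‖ + ‖g t - g s‖ := norm_add_le _ _
      _ ≤ ‖g s‖ + ∫ u in c..d, ‖D u‖ := by linarith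

/-- Sup-norm interpolation inequality (inequality (5.8) of the paper, from Lee's work):
for every `q ≥ 1` there is a constant `C_q` such that for all `a < b`, every continuously
differentiable `g : [a,b] → ℂ` and every `μ > 0`,
`sup_{t∈[a,b]} |g(t)| ≤ C_q (|g(a)| + μ^{1/q-1} ‖g'‖_{L^q[a,b]} + μ^{1/q} ‖g‖_{L^q[a,b]})`. -/
theorem sup_norm_interpolation (q : ℝ) (hq : 1 ≤ q) :
    ∃ C : ℝ, 0 < C ∧ ∀ a b : ℝ, a < b → ∀ g : ℝ → ℂ,
      ContDiffOn ℝ 1 g (Set.Icc a b) → ∀ μ : ℝ, 0 < μ → ∀ t ∈ Set.Icc a b,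
        ‖g t‖ ≤ C * (‖g a‖
          + μ ^ (1 / q - 1) * (∫ s in a..b, ‖derivWithin g (Set.Icc a b) s‖ ^ q) ^ (1 / q)
          + μ ^ (1 / q) * (∫ s in a..b, ‖g s‖ ^ q) ^ (1 / q)) := by
  refine ⟨1, one_pos, ?_⟩
  intro a b hab g hg μ hμ t ht
  rw [one_mul]
  set D := derivWithin g (Set.Icc a b) with hD
  have hq0 : 0 < q := lt_of_lt_of_le one_pos hq
  have hq0' : (0 : ℝ) ≤ q := hq0.le
  have hiq : (0 : ℝ) ≤ 1 / q := by positivity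
  have h1q : (0 : ℝ) ≤ 1 - 1 / q := by
    have : 1 / q ≤ 1 := by
      rw [div_le_one hq0]; exact hq
    linarith
  -- continuity facts
  have hDc : ContinuousOn D (Set.Icc a b) :=
    hg.continuousOn_derivWithin (uniqueDiffOn_Icc hab) le_rfl
  have hDnc : ContinuousOn (fun u => ‖D u‖) (Set.Icc a b) := hDc.norm
  have hgnc : ContinuousOn (fun u => ‖g u‖) (Set.Icc a b) := hg.continuousOn.norm
  have hDqc : ContinuousOn (fun u => ‖D u‖ ^ q) (Set.Icc a b) :=
    hDnc.rpow_const fun x _ => Or.inr hq0'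
  have hgqc : ContinuousOn (fun u => ‖g u‖ ^ q) (Set.Icc a b) :=
    hgnc.rpow_const fun x _ => Or.inr hq0'
  -- nonnegativity of the L^q quantities
  have hIDq : 0 ≤ ∫ s in a..b, ‖D s‖ ^ q :=
    intervalIntegral.integral_nonneg hab.le fun u _ => Real.rpow_nonneg (norm_nonneg _) q
  have hIGq : 0 ≤ ∫ s in a..b, ‖g s‖ ^ q :=
    intervalIntegral.integral_nonneg hab.le fun u _ => Real.rpow_nonneg (norm_nonneg _) q
  have hDq0 : 0 ≤ (∫ s in a..b, ‖D s‖ ^ q) ^ (1 / q) := Real.rpow_nonneg hIDq _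
  have hGq0 : 0 ≤ (∫ s in a..b, ‖g s‖ ^ q) ^ (1 / q) := Real.rpow_nonneg hIGq _
  -- the key power identity
  have hpow_eq : (1 / μ) ^ (1 - 1 / q) = μ ^ (1 / q - 1) := by
    rw [one_div, Real.inv_rpow hμ.le, ← Real.rpow_neg hμ.le, neg_sub]
  by_cases hμb : μ * (b - a) ≤ 1
  · -- small μ : use the endpoint a
    have hba : b - a ≤ 1 / μ := by
      rw [le_div_iff₀ hμ]; linarith [hμb]
    have h1 : ‖g t‖ ≤ ‖g a‖ + ∫ u in a..b, ‖D u‖ :=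
      base_bound_aux hab hg le_rfl hab.le le_rfl (Set.left_mem_Icc.2 hab.le) ht
    have h2 : ∫ u in a..b, ‖D u‖
        ≤ (b - a) ^ (1 - 1 / q) * (∫ s in a..b, ‖D s‖ ^ q) ^ (1 / q) :=
      holder_interval_aux hq hab.le hDnc fun s _ => norm_nonneg _
    have h3 : (b - a) ^ (1 - 1 / q) ≤ μ ^ (1 / q - 1) := by
      rw [← hpow_eq]
      exact Real.rpow_le_rpow (sub_nonneg.2 hab.le) hba h1q
    have h4 : (b - a) ^ (1 - 1 / q) * (∫ s in a..b, ‖D s‖ ^ q) ^ (1 / q)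
        ≤ μ ^ (1 / q - 1) * (∫ s in a..b, ‖D s‖ ^ q) ^ (1 / q) :=
      mul_le_mul_of_nonneg_right h3 hDq0
    have h5 : 0 ≤ μ ^ (1 / q) * (∫ s in a..b, ‖g s‖ ^ q) ^ (1 / q) := by positivity
    linarith
  · -- large μ : use an interval of length 1/μ around t
    set L := 1 / μ with hLdef
    have hL : 0 < L := by positivity
    have hLb : L ≤ b - a := by
      rw [hLdef, div_le_iff₀ hμ]
      nlinarith [not_le.1 hμb]
    set c := min t (b - L) with hc
    set d := c + L with hd
    have hac : a ≤ c := le_min ht.1 (by linarith)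
    have hdb : d ≤ b := by
      have := min_le_right t (b - L)
      rw [hd]; linarith
    have hcd : c ≤ d := by rw [hd]; linarith
    have htc : c ≤ t := min_le_left _ _
    have htd : t ≤ d := by
      rcases le_total t (b - L) with h | h
      · rw [hd, hc, min_eq_left h]; linarith
      · rw [hd, hc, min_eq_right h]; linarith [ht.2]
    have hdc : d - c = L := by rw [hd]; ring
    have hsub : Set.Icc c d ⊆ Set.Icc a b := Set.Icc_subset_Icc hac hdb
    -- pick the minimizer of ‖g‖ on [c,d]
    obtain ⟨s₀, hs₀I, hs₀min⟩ := isCompact_Icc.exists_isMinOn (Set.nonempty_Icc.2 hcd)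
      (hgnc.mono hsub)
    -- bound on ‖g s₀‖
    have hmin1 : ‖g s₀‖ ^ q * L ≤ ∫ s in c..d, ‖g s‖ ^ q := by
      have hconst : ∫ _ in c..d, ‖g s₀‖ ^ q = ‖g s₀‖ ^ q * L := by
        rw [intervalIntegral.integral_const, smul_eq_mul, hdc, mul_comm]
      rw [← hconst]
      refine intervalIntegral.integral_mono_on hcd intervalIntegrable_const
        ((hgqc.mono hsub).intervalIntegrable_of_Icc hcd) fun x hx => ?_
      exact Real.rpow_le_rpow (norm_nonneg _) (hs₀min hx) hq0'
    have hmin2 : ∫ s in c..d, ‖g s‖ ^ q ≤ ∫ s in a..b, ‖g s‖ ^ q := by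
      refine intervalIntegral.integral_mono_interval hac hcd hdb ?_
        (hgqc.intervalIntegrable_of_Icc hab.le)
      exact Filter.Eventually.of_forall fun u => Real.rpow_nonneg (norm_nonneg _) q
    have hmin3 : ‖g s₀‖ ^ q ≤ μ * ∫ s in a..b, ‖g s‖ ^ q := by
      have h := hmin1.trans hmin2
      rw [hLdef, mul_one_div, div_le_iff₀ hμ] at h
      linarith [h]
    have hmin : ‖g s₀‖ ≤ μ ^ (1 / q) * (∫ s in a..b, ‖g s‖ ^ q) ^ (1 / q) := by
      calc ‖g s₀‖ = (‖g s₀‖ ^ q) ^ (1 / q) := by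
            rw [one_div, Real.rpow_rpow_inv (norm_nonneg _) hq0.ne']
        _ ≤ (μ * ∫ s in a..b, ‖g s‖ ^ q) ^ (1 / q) :=
            Real.rpow_le_rpow (Real.rpow_nonneg (norm_nonneg _) q) hmin3 hiq
        _ = μ ^ (1 / q) * (∫ s in a..b, ‖g s‖ ^ q) ^ (1 / q) :=
            Real.mul_rpow hμ.le hIGq
    -- bound on the derivative integral over [c,d]
    have hder1 : ∫ u in c..d, ‖D u‖
        ≤ (d - c) ^ (1 - 1 / q) * (∫ s in c..d, ‖D s‖ ^ q) ^ (1 / q) :=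
      holder_interval_aux hq hcd (hDnc.mono hsub) fun s _ => norm_nonneg _
    have hder2 : ∫ s in c..d, ‖D s‖ ^ q ≤ ∫ s in a..b, ‖D s‖ ^ q := by
      refine intervalIntegral.integral_mono_interval hac hcd hdb ?_
        (hDqc.intervalIntegrable_of_Icc hab.le)
      exact Filter.Eventually.of_forall fun u => Real.rpow_nonneg (norm_nonneg _) q
    have hIDcd : 0 ≤ ∫ s in c..d, ‖D s‖ ^ q :=
      intervalIntegral.integral_nonneg hcd fun u _ => Real.rpow_nonneg (norm_nonneg _) q
    have hder : ∫ u in c..d, ‖D u‖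
        ≤ μ ^ (1 / q - 1) * (∫ s in a..b, ‖D s‖ ^ q) ^ (1 / q) := by
      refine hder1.trans ?_
      rw [hdc, ← hpow_eq]
      exact mul_le_mul_of_nonneg_left (Real.rpow_le_rpow hIDcd hder2 hiq)
        (Real.rpow_nonneg hL.le _)
    -- combine
    have hbase : ‖g t‖ ≤ ‖g s₀‖ + ∫ u in c..d, ‖D u‖ :=
      base_bound_aux hab hg hac hcd hdb hs₀I ⟨htc, htd⟩
    have hga : (0 : ℝ) ≤ ‖g a‖ := norm_nonneg _
    linarith
end

section
/- From frequency-localized Strichartz estimates to maximal estimates (Lemma 5.2, torus version): Let n ≥ 1 and q ≥ 2. There is a constant C = C(n,q) with the following property. Let N ≥ 1 and A > 0, and suppose that for every finitely supported c' : ℤⁿ → ℂ with c'_k = 0 unless N ≤ |k| < 2N, the evolution u'(t,x) = Σ_k e^{it|k|²} c'_k e^{ik·x} satisfies ‖u'‖_{L^q((0,1] × [0,2π]ⁿ, dt dx)} ≤ A (Σ_k |c'_k|²)^{1/2}. Then for every finitely supported c : ℤⁿ → ℂ with c_k = 0 unless N ≤ |k| < 2N, with f(x) = Σ_k c_k e^{ik·x}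 and u(t,x) = Σ_k e^{it|k|²} c_k e^{ik·x}, one has ‖ sup_{0<t≤1} |u(t,x)| ‖_{L^q([0,2π]ⁿ, dx)} ≤ C ( N^{2/q} A (Σ_k |c_k|²)^{1/2} + ‖f‖_{L^q([0,2π]ⁿ)} ). -/
open MeasureTheory Finset

/-- The free Schrödinger evolution `u(t,x) = ∑ₖ e^{it|k|²} cₖ e^{ik·x}` on `ℝⁿ` of the
trigonometric polynomial with finitely supported Fourier coefficients `c : ℤⁿ → ℂ`. -/
noncomputable def torusEvol (n : ℕ) (c : (Fin n → ℤ) →₀ ℂ) (t : ℝ) (x : Fin n → ℝ) : ℂ :=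
  ∑ k ∈ c.support,
    Complex.exp (Complex.I * (t : ℂ) * (∑ i, (k i : ℂ) ^ 2)) * c k *
      Complex.exp (Complex.I * (∑ i, (k i : ℂ) * (x i : ℂ)))

/-- The maximal function `sup_{0 < t ≤ 1} |u(t,x)|`. -/
noncomputable def torusMax (n : ℕ) (c : (Fin n → ℤ) →₀ ℂ) (x : Fin n → ℝ) : ℝ :=
  ⨆ t ∈ Set.Ioc (0 : ℝ) 1, ‖torusEvol n c t x‖

/-- The fundamental cube `[0,2π]ⁿ`. -/
def torusCube (n : ℕ) : Set (Fin n → ℝ) := Set.univ.pi fun _ => Set.Icc 0 (2 * Real.pi)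

/-- The Euclidean length `|k| = (k₁² + ⋯ + kₙ²)^{1/2}` of a frequency `k ∈ ℤⁿ`. -/
noncomputable def freqNorm (n : ℕ) (k : Fin n → ℤ) : ℝ := Real.sqrt (∑ i, (k i : ℝ) ^ 2)

/-! ### auxiliary lemmas -/

lemma sq_norm_rpow {a : ℝ} (ha : 0 ≤ a) (q : ℝ) : (a ^ 2) ^ (q / 2) = a ^ q := by
  rw [← Real.rpow_natCast a 2, ← Real.rpow_mul ha]
  norm_num
  rw [show 2 * (q / 2) = q by ring]

lemma norm_exp_I_mul_real (r : ℝ) : ‖Complex.exp (Complex.I * (r:ℂ))‖ = 1 := by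
  simp [Complex.norm_exp]

lemma sum_sq_cast (n : ℕ) (k : Fin n → ℤ) :
    (∑ i, (k i : ℂ) ^ 2) = ((∑ i, (k i : ℝ) ^ 2 : ℝ) : ℂ) := by push_cast; ring

lemma torusEvol_norm_le (n : ℕ) (c : (Fin n → ℤ) →₀ ℂ) (t : ℝ) (x : Fin n → ℝ) :
    ‖torusEvol n c t x‖ ≤ ∑ k ∈ c.support, ‖c k‖ := by
  refine (norm_sum_le _ _).trans (le_of_eq (Finset.sum_congr rfl fun k _ => ?_))
  rw [norm_mul, norm_mul, sum_sq_cast, show (∑ i, (k i : ℂ) * (x i : ℂ))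
    = ((∑ i, (k i : ℝ) * x i : ℝ) : ℂ) by push_cast; ring]
  have h1 : Complex.I * (t:ℂ) * ((∑ i, (k i : ℝ) ^ 2 : ℝ) : ℂ)
      = Complex.I * ((t * (∑ i, (k i : ℝ) ^ 2) : ℝ) : ℂ) := by push_cast; ring
  rw [h1, norm_exp_I_mul_real, norm_exp_I_mul_real]
  ring

lemma torusEvol_continuous (n : ℕ) (c : (Fin n → ℤ) →₀ ℂ) :
    Continuous (fun p : ℝ × (Fin n → ℝ) => torusEvol n c p.1 p.2) := by
  unfold torusEvol
  refine continuous_finset_sum _ fun k _ => ?_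
  fun_prop

lemma torusEvol_hasDerivAt (n : ℕ) (c : (Fin n → ℤ) →₀ ℂ) (x : Fin n → ℝ) (t : ℝ) :
    HasDerivAt (fun s => torusEvol n c s x)
      (∑ k ∈ c.support,
        Complex.exp (Complex.I * (t : ℂ) * (∑ i, (k i : ℂ) ^ 2)) *
          ((Complex.I * ∑ i, (k i : ℂ) ^ 2) * c k) *
          Complex.exp (Complex.I * (∑ i, (k i : ℂ) * (x i : ℂ)))) t := by
  unfold torusEvol
  refine HasDerivAt.fun_sum fun k _ => ?_
  have h1 : HasDerivAt (fun s : ℝ => Complex.I * (s : ℂ) * (∑ i, (k i : ℂ) ^ 2))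
      (Complex.I * (∑ i, (k i : ℂ) ^ 2)) t := by
    simpa using ((Complex.ofRealCLM.hasDerivAt (x := t)).const_mul Complex.I).mul_const
      (∑ i, (k i : ℂ) ^ 2)
  have h2 := (h1.cexp.mul_const (c k)).mul_const
      (Complex.exp (Complex.I * (∑ i, (k i : ℂ) * (x i : ℂ))))
  refine h2.congr_deriv ?_
  ring

lemma key_ftc {u D : ℝ → ℂ} (hu : ∀ t, HasDerivAt u (D t) t) (hD : Continuous D)
    (hucont : Continuous u) {q : ℝ} (hq : 2 ≤ q) {t : ℝ} (ht0 : 0 ≤ t) (ht1 : t ≤ 1) :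
    ‖u t‖ ^ q ≤ ‖u 0‖ ^ q + ∫ s in (0:ℝ)..1, q * ‖u s‖ ^ (q - 1) * ‖D s‖ := by
  set φ : ℝ → ℝ := fun s => (u s).re ^ 2 + (u s).im ^ 2 with hφdef
  set φ' : ℝ → ℝ := fun s => 2 * (u s).re * (D s).re + 2 * (u s).im * (D s).im with hφ'def
  have hre : ∀ s, HasDerivAt (fun s => (u s).re) ((D s).re) s := fun s =>
    (Complex.reCLM.hasFDerivAt.comp_hasDerivAt s (hu s))
  have him : ∀ s, HasDerivAt (fun s => (u s).im) ((D s).im) s := fun s =>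
    (Complex.imCLM.hasFDerivAt.comp_hasDerivAt s (hu s))
  have hφ : ∀ s, HasDerivAt φ (φ' s) s := fun s => by
    exact (((hre s).pow 2).add ((him s).pow 2)).congr_deriv (by simp only [hφ'def]; norm_num)
  have hφnorm : ∀ s, φ s = ‖u s‖ ^ 2 := fun s => by
    show (u s).re ^ 2 + (u s).im ^ 2 = ‖u s‖ ^ 2
    rw [Complex.sq_norm, Complex.normSq_apply]; ring
  have hφcont : Continuous φ := by fun_prop
  have hφ'cont : Continuous φ' := by fun_prop
  set h : ℝ → ℝ := fun s => φ s ^ (q / 2) with hhdef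
  set h' : ℝ → ℝ := fun s => q / 2 * φ s ^ (q / 2 - 1) * φ' s with hh'def
  have hq2 : (1:ℝ) ≤ q / 2 := by linarith
  have hh : ∀ s, HasDerivAt h (h' s) s := fun s => by
    have := (Real.hasDerivAt_rpow_const (x := φ s) (p := q / 2) (Or.inr hq2)).comp s (hφ s)
    exact this
  have hh'cont : Continuous h' :=
    (continuous_const.mul (hφcont.rpow_const fun s => Or.inr (by linarith))).mul hφ'cont
  have hb : ∀ s, h' s ≤ q * ‖u s‖ ^ (q - 1) * ‖D s‖ := by
    intro s
    have hrhs : (0:ℝ) ≤ q * ‖u s‖ ^ (q-1) * ‖D s‖ := by positivity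
    have hφ'le : φ' s ≤ 2 * ‖u s‖ * ‖D s‖ := by
      have h1 : φ' s = 2 * ((starRingEnd ℂ) (u s) * D s).re := by
        show 2 * (u s).re * (D s).re + 2 * (u s).im * (D s).im = _
        simp [Complex.mul_re]; ring
      have h2 : ((starRingEnd ℂ) (u s) * D s).re ≤ ‖u s‖ * ‖D s‖ := by
        calc ((starRingEnd ℂ) (u s) * D s).re ≤ ‖(starRingEnd ℂ) (u s) * D s‖ :=
              Complex.re_le_norm _
          _ = ‖u s‖ * ‖D s‖ := by
              rw [norm_mul, Complex.norm_conj]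
      linarith
    show q / 2 * φ s ^ (q / 2 - 1) * φ' s ≤ q * ‖u s‖ ^ (q - 1) * ‖D s‖
    rcases eq_or_lt_of_le (norm_nonneg (u s)) with h0 | h0
    · have hφ0 : φ s = 0 := by rw [hφnorm, ← h0]; norm_num
      rcases eq_or_lt_of_le hq2 with hq2' | hq2'
      · have hu0 : u s = 0 := by rwa [eq_comm, norm_eq_zero] at h0
        have hφ'0 : φ' s = 0 := by
          show 2 * (u s).re * (D s).re + 2 * (u s).im * (D s).im = 0
          simp [hu0]
        rw [hφ'0, mul_zero]
        exact hrhs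
      · rw [hφ0, Real.zero_rpow (by linarith), mul_zero, zero_mul]
        exact hrhs
    · have hkey2 : φ s ^ (q / 2 - 1) = ‖u s‖ ^ (q - 2) := by
        rw [hφnorm, ← Real.rpow_natCast ‖u s‖ 2, ← Real.rpow_mul (norm_nonneg _)]
        norm_num
        rw [show 2 * (q / 2 - 1) = q - 2 by ring]
      have hkey : φ s ^ (q / 2 - 1) * ‖u s‖ = ‖u s‖ ^ (q - 1) := by
        rw [hkey2]
        calc ‖u s‖ ^ (q - 2) * ‖u s‖ = ‖u s‖ ^ (q - 2) * ‖u s‖ ^ (1:ℝ) := by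
              rw [Real.rpow_one]
          _ = ‖u s‖ ^ (q - 2 + 1) := (Real.rpow_add h0 _ _).symm
          _ = ‖u s‖ ^ (q - 1) := by rw [show q - 2 + 1 = q - 1 by ring]
      have hpos : 0 ≤ q / 2 * φ s ^ (q / 2 - 1) := by positivity
      calc q / 2 * φ s ^ (q / 2 - 1) * φ' s
          ≤ q / 2 * φ s ^ (q / 2 - 1) * (2 * ‖u s‖ * ‖D s‖) :=
            mul_le_mul_of_nonneg_left hφ'le hpos
        _ = q * (φ s ^ (q / 2 - 1) * ‖u s‖) * ‖D s‖ := by ring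
        _ = q * ‖u s‖ ^ (q - 1) * ‖D s‖ := by rw [hkey]
  have hBcont : Continuous fun s => q * ‖u s‖ ^ (q - 1) * ‖D s‖ :=
    (continuous_const.mul ((hucont.norm).rpow_const fun s => Or.inr (by linarith))).mul hD.norm
  have hftc : ∫ s in (0:ℝ)..t, h' s = h t - h 0 :=
    intervalIntegral.integral_eq_sub_of_hasDerivAt (fun s _ => hh s)
      (hh'cont.intervalIntegrable _ _)
  have hint1 : (∫ s in (0:ℝ)..t, h' s) ≤ ∫ s in (0:ℝ)..t, q * ‖u s‖ ^ (q - 1) * ‖D s‖ :=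
    intervalIntegral.integral_mono_on ht0 (hh'cont.intervalIntegrable _ _)
      (hBcont.intervalIntegrable _ _) (fun s _ => hb s)
  have hint2 : (∫ s in (0:ℝ)..t, q * ‖u s‖ ^ (q - 1) * ‖D s‖)
      ≤ ∫ s in (0:ℝ)..1, q * ‖u s‖ ^ (q - 1) * ‖D s‖ :=
    intervalIntegral.integral_mono_interval le_rfl ht0 ht1
      (Filter.Eventually.of_forall fun s => by positivity) (hBcont.intervalIntegrable _ _)
  have hht : h t = ‖u t‖ ^ q := by
    show φ t ^ (q / 2) = _
    rw [hφnorm, sq_norm_rpow (norm_nonneg _)]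
  have hh0 : h 0 = ‖u 0‖ ^ q := by
    show φ 0 ^ (q / 2) = _
    rw [hφnorm, sq_norm_rpow (norm_nonneg _)]
  rw [← hht, ← hh0]
  linarith [hftc, hint1, hint2]

lemma young_wt {x y lam q : ℝ} (hx : 0 ≤ x) (hy : 0 ≤ y) (hlam : 0 < lam) (hq : 2 ≤ q) :
    q * x ^ (q - 1) * y ≤ (q - 1) * lam * x ^ q + lam ^ (1 - q) * y ^ q := by
  have hq1 : (0:ℝ) < q - 1 := by linarith
  have hq0 : (0:ℝ) < q := by linarith
  have hpq : Real.HolderConjugate (q / (q - 1)) q := by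
    rw [Real.holderConjugate_iff]
    constructor
    · rw [lt_div_iff₀ hq1]; linarith
    · rw [inv_div]; field_simp; ring
  have ha : (0:ℝ) ≤ lam ^ ((q - 1) / q) * x ^ (q - 1) := by positivity
  have hb : (0:ℝ) ≤ lam ^ (-((q - 1) / q)) * y := by positivity
  have h := Real.young_inequality_of_nonneg ha hb hpq
  have e1 : (lam ^ ((q - 1) / q) * x ^ (q - 1)) * (lam ^ (-((q - 1) / q)) * y)
      = x ^ (q - 1) * y := by
    rw [show lam ^ ((q-1)/q) * x ^ (q-1) * (lam ^ (-((q-1)/q)) * y)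
      = (lam ^ ((q-1)/q) * lam ^ (-((q-1)/q))) * (x ^ (q-1) * y) by ring,
      ← Real.rpow_add hlam]
    simp
  have e2 : (lam ^ ((q - 1) / q) * x ^ (q - 1)) ^ (q / (q - 1)) = lam * x ^ q := by
    rw [Real.mul_rpow (by positivity) (by positivity), ← Real.rpow_mul hlam.le,
      ← Real.rpow_mul hx, show (q - 1) / q * (q / (q - 1)) = 1 by field_simp,
      show (q - 1) * (q / (q - 1)) = q by field_simp, Real.rpow_one]
  have e3 : (lam ^ (-((q - 1) / q)) * y) ^ q = lam ^ (1 - q) * y ^ q := by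
    rw [Real.mul_rpow (by positivity) hy, ← Real.rpow_mul hlam.le,
      show -((q - 1) / q) * q = 1 - q by field_simp; ring]
  rw [e1, e2, e3] at h
  have hmul := mul_le_mul_of_nonneg_left h hq0.le
  calc q * x ^ (q - 1) * y = q * (x ^ (q - 1) * y) := by ring
    _ ≤ q * (lam * x ^ q / (q / (q - 1)) + lam ^ (1 - q) * y ^ q / q) := hmul
    _ = (q - 1) * lam * x ^ q + lam ^ (1 - q) * y ^ q := by
        field_simp

lemma rpow_add_le {a b p : ℝ} (ha : 0 ≤ a) (hb : 0 ≤ b) (hp : 0 < p) (hp1 : p ≤ 1) :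
    (a + b) ^ p ≤ a ^ p + b ^ p := by
  have := NNReal.rpow_add_le_add_rpow (a.toNNReal) (b.toNNReal) hp.le hp1
  have hco := NNReal.coe_le_coe.mpr this
  rw [NNReal.coe_add, NNReal.coe_rpow, NNReal.coe_rpow, NNReal.coe_rpow, NNReal.coe_add,
    Real.coe_toNNReal a ha, Real.coe_toNNReal b hb] at hco
  exact hco

lemma torusEvol_continuous_t (n : ℕ) (c : (Fin n → ℤ) →₀ ℂ) (x : Fin n → ℝ) :
    Continuous (fun t => torusEvol n c t x) := by
  unfold torusEvol
  refine continuous_finset_sum _ fun k _ => ?_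
  fun_prop

lemma torusEvol_continuous_x (n : ℕ) (c : (Fin n → ℤ) →₀ ℂ) (t : ℝ) :
    Continuous (fun x : Fin n → ℝ => torusEvol n c t x) := by
  unfold torusEvol
  refine continuous_finset_sum _ fun k _ => ?_
  fun_prop

lemma torusEvol_continuous_swap (n : ℕ) (c : (Fin n → ℤ) →₀ ℂ) :
    Continuous (fun p : (Fin n → ℝ) × ℝ => torusEvol n c p.2 p.1) := by
  unfold torusEvol
  refine continuous_finset_sum _ fun k _ => ?_
  fun_prop

set_option maxHeartbeats 1000000 in
/-- From frequency-localized Strichartz estimates to maximal estimates (Lemma 5.2, torus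
version): if all evolutions with frequencies in the annulus `N ≤ |k| < 2N` satisfy an
`L^q((0,1]×[0,2π]ⁿ)` Strichartz bound with constant `A`, then the maximal function of any
such evolution satisfies
`‖sup_{0<t≤1}|u|‖_{L^q} ≤ C (N^{2/q} A ‖c‖_{ℓ²} + ‖f‖_{L^q})`. -/
theorem maximal_from_strichartz (n : ℕ) (hn : 1 ≤ n) (q : ℝ) (hq : 2 ≤ q) :
    ∃ C : ℝ, 0 < C ∧ ∀ N : ℝ, 1 ≤ N → ∀ A : ℝ, 0 < A →
      (∀ c' : (Fin n → ℤ) →₀ ℂ,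
        (∀ k, c' k ≠ 0 → N ≤ freqNorm n k ∧ freqNorm n k < 2 * N) →
        (∫ t in Set.Ioc (0 : ℝ) 1, ∫ x in torusCube n, ‖torusEvol n c' t x‖ ^ q) ^ (1 / q)
          ≤ A * (∑ k ∈ c'.support, ‖c' k‖ ^ 2) ^ ((1 : ℝ) / 2)) →
      ∀ c : (Fin n → ℤ) →₀ ℂ,
        (∀ k, c k ≠ 0 → N ≤ freqNorm n k ∧ freqNorm n k < 2 * N) →
        (∫ x in torusCube n, torusMax n c x ^ q) ^ (1 / q)
          ≤ C * (N ^ (2 / q) * A * (∑ k ∈ c.support, ‖c k‖ ^ 2) ^ ((1 : ℝ) / 2)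
            + (∫ x in torusCube n, ‖torusEvol n c 0 x‖ ^ q) ^ (1 / q)) := by
  have hq0 : (0:ℝ) < q := by linarith
  have hq0' : q ≠ 0 := ne_of_gt hq0
  refine ⟨(4*q) ^ (1/q) + 1, by positivity, ?_⟩
  intro N hN A hA hS c hc
  have hN0 : (0:ℝ) < N := by linarith
  -- the derivative coefficients
  have hSk : ∀ k, c k ≠ 0 → (0:ℝ) < ∑ i, (k i:ℝ)^2 := by
    intro k hk
    have h1 : (0:ℝ) < freqNorm n k := lt_of_lt_of_le (by linarith) (hc k hk).1
    exact Real.sqrt_pos.mp h1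
  have hmem : ∀ k : Fin n → ℤ, k ∈ c.support ↔
      Complex.I * (∑ i, (k i:ℂ)^2) * c k ≠ 0 := by
    intro k
    constructor
    · intro hk
      have hk' := Finsupp.mem_support_iff.mp hk
      have h1 : (∑ i, (k i:ℂ)^2) ≠ 0 := by
        rw [sum_sq_cast]
        exact_mod_cast (hSk k hk').ne'
      exact mul_ne_zero (mul_ne_zero Complex.I_ne_zero h1) hk'
    · intro hk
      exact Finsupp.mem_support_iff.mpr fun h0 => hk (by rw [h0, mul_zero])
  set c' : (Fin n → ℤ) →₀ ℂ :=
    ⟨c.support, fun k => Complex.I * (∑ i, (k i:ℂ)^2) * c k, hmem⟩ with hc'def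
  have hc'supp : c'.support = c.support := rfl
  have hc'app : ∀ k, c' k = Complex.I * (∑ i, (k i:ℂ)^2) * c k := fun k => rfl
  have hc' : ∀ k, c' k ≠ 0 → N ≤ freqNorm n k ∧ freqNorm n k < 2 * N := by
    intro k hk
    refine hc k fun h0 => hk ?_
    rw [hc'app, h0, mul_zero]
  -- derivative
  have hderiv : ∀ (x : Fin n → ℝ) (t : ℝ),
      HasDerivAt (fun s => torusEvol n c s x) (torusEvol n c' t x) t := by
    intro x t
    have h := torusEvol_hasDerivAt n c x t
    have he : torusEvol n c' t x = ∑ k ∈ c.support,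
        Complex.exp (Complex.I * (t : ℂ) * (∑ i, (k i : ℂ) ^ 2)) *
          ((Complex.I * ∑ i, (k i : ℂ) ^ 2) * c k) *
          Complex.exp (Complex.I * (∑ i, (k i : ℂ) * (x i : ℂ))) := by
      unfold torusEvol
      rw [hc'supp]
      refine Finset.sum_congr rfl fun k _ => ?_
      rw [hc'app]
    rw [he]
    exact h
  -- ℓ² quantities
  set l2 : ℝ := (∑ k ∈ c.support, ‖c k‖ ^ 2) ^ ((1:ℝ)/2) with hl2def
  have hl2nn : 0 ≤ l2 := Real.rpow_nonneg (by positivity) _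
  have hc'norm : ∀ k ∈ c.support, ‖c' k‖ ≤ 4*N^2*‖c k‖ := by
    intro k hk
    have hk' := Finsupp.mem_support_iff.mp hk
    have hS2 : (∑ i, (k i:ℝ)^2) = freqNorm n k ^ 2 := by
      rw [freqNorm, Real.sq_sqrt (by positivity)]
    have hlt : freqNorm n k ^ 2 < (2*N)^2 := by
      have := (hc k hk').2
      have h0 : 0 ≤ freqNorm n k := Real.sqrt_nonneg _
      exact pow_lt_pow_left₀ this h0 (by norm_num)
    rw [hc'app, norm_mul, norm_mul, Complex.norm_I, one_mul, sum_sq_cast,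
      Complex.norm_real, Real.norm_of_nonneg (by positivity)]
    have : (∑ i, (k i:ℝ)^2) ≤ 4*N^2 := by
      rw [hS2]; nlinarith
    exact mul_le_mul_of_nonneg_right this (norm_nonneg _)
  have hl2' : (∑ k ∈ c'.support, ‖c' k‖ ^ 2) ^ ((1:ℝ)/2) ≤ 4*N^2*l2 := by
    have hsum : ∑ k ∈ c'.support, ‖c' k‖^2 ≤ (4*N^2)^2 * ∑ k ∈ c.support, ‖c k‖^2 := by
      rw [hc'supp, Finset.mul_sum]
      refine Finset.sum_le_sum fun k hk => ?_
      calc ‖c' k‖^2 ≤ (4*N^2*‖c k‖)^2 := pow_le_pow_left₀ (norm_nonneg _) (hc'norm k hk) 2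
        _ = (4*N^2)^2*‖c k‖^2 := by ring
    calc (∑ k ∈ c'.support, ‖c' k‖ ^ 2) ^ ((1:ℝ)/2)
        ≤ ((4*N^2)^2 * ∑ k ∈ c.support, ‖c k‖^2) ^ ((1:ℝ)/2) :=
          Real.rpow_le_rpow (by positivity) hsum (by norm_num)
      _ = 4*N^2*l2 := by
          rw [Real.mul_rpow (by positivity) (by positivity), hl2def]
          congr 1
          rw [show ((1:ℝ)/2) = (1:ℝ)/2 by norm_num, sq_norm_rpow (by positivity : (0:ℝ) ≤ 4*N^2) 1,
            Real.rpow_one]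
  -- continuity facts
  have hu_cont := torusEvol_continuous n c
  have hv_cont := torusEvol_continuous n c'
  have hu_cont_t : ∀ x, Continuous (fun t => torusEvol n c t x) := torusEvol_continuous_t n c
  have hv_cont_t : ∀ x, Continuous (fun t => torusEvol n c' t x) := torusEvol_continuous_t n c'
  have hu_cont_x : ∀ t, Continuous (fun x : Fin n → ℝ => torusEvol n c t x) :=
    torusEvol_continuous_x n c
  have hv_cont_x : ∀ t, Continuous (fun x : Fin n → ℝ => torusEvol n c' t x) :=
    torusEvol_continuous_x n c'
  -- the maximal function bound
  have hmax_nonneg : ∀ x, 0 ≤ torusMax n c x := fun x =>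
    Real.iSup_nonneg fun t => Real.iSup_nonneg fun _ => norm_nonneg _
  have hKnn : ∀ x, 0 ≤ ∫ s in (0:ℝ)..1,
      q * ‖torusEvol n c s x‖ ^ (q - 1) * ‖torusEvol n c' s x‖ := fun x =>
    intervalIntegral.integral_nonneg zero_le_one fun s _ => by positivity
  have hGnn : ∀ x, 0 ≤ ‖torusEvol n c 0 x‖ ^ q + ∫ s in (0:ℝ)..1,
      q * ‖torusEvol n c s x‖ ^ (q - 1) * ‖torusEvol n c' s x‖ := fun x =>
    add_nonneg (Real.rpow_nonneg (norm_nonneg _) _) (hKnn x)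
  have hmaxq : ∀ x, torusMax n c x ^ q ≤ ‖torusEvol n c 0 x‖ ^ q + ∫ s in (0:ℝ)..1,
      q * ‖torusEvol n c s x‖ ^ (q - 1) * ‖torusEvol n c' s x‖ := by
    intro x
    set G : ℝ := ‖torusEvol n c 0 x‖ ^ q + ∫ s in (0:ℝ)..1,
      q * ‖torusEvol n c s x‖ ^ (q - 1) * ‖torusEvol n c' s x‖ with hGdef
    have hsup : torusMax n c x ≤ G ^ (1/q) := by
      unfold torusMax
      refine Real.iSup_le (fun t => Real.iSup_le (fun ht => ?_)
        (Real.rpow_nonneg (hGnn x) _)) (Real.rpow_nonneg (hGnn x) _)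
      have h1 : ‖torusEvol n c t x‖ ^ q ≤ G :=
        key_ftc (hderiv x) (hv_cont_t x) (hu_cont_t x) hq ht.1.le ht.2
      rw [one_div]
      have h2 := Real.rpow_le_rpow (Real.rpow_nonneg (norm_nonneg _) _) h1
        (inv_nonneg.mpr hq0.le)
      rwa [Real.rpow_rpow_inv (norm_nonneg _) hq0'] at h2
    have h3 := Real.rpow_le_rpow (hmax_nonneg x) hsup hq0.le
    rwa [one_div, Real.rpow_inv_rpow (hGnn x) hq0'] at h3
  -- measures
  have hcube : IsCompact (torusCube n) := isCompact_univ_pi fun i => isCompact_Icc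
  haveI instx : IsFiniteMeasure (volume.restrict (torusCube n)) :=
    ⟨by rw [Measure.restrict_apply_univ]; exact hcube.measure_lt_top⟩
  haveI instt : IsFiniteMeasure (volume.restrict (Set.Ioc (0:ℝ) 1)) :=
    ⟨by rw [Measure.restrict_apply_univ]; exact measure_Ioc_lt_top⟩
  -- global bounds
  have hM0nn : 0 ≤ ∑ k ∈ c.support, ‖c k‖ := Finset.sum_nonneg fun _ _ => norm_nonneg _
  have hM1nn : 0 ≤ ∑ k ∈ c'.support, ‖c' k‖ := Finset.sum_nonneg fun _ _ => norm_nonneg _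
  have hBbd : ∀ t x, |q * ‖torusEvol n c t x‖ ^ (q - 1) * ‖torusEvol n c' t x‖|
      ≤ q * (∑ k ∈ c.support, ‖c k‖) ^ (q-1) * (∑ k ∈ c'.support, ‖c' k‖) := by
    intro t x
    rw [abs_of_nonneg (by positivity)]
    have h1 : ‖torusEvol n c t x‖ ^ (q-1) ≤ (∑ k ∈ c.support, ‖c k‖) ^ (q-1) :=
      Real.rpow_le_rpow (norm_nonneg _) (torusEvol_norm_le n c t x) (by linarith)
    have h2 : ‖torusEvol n c' t x‖ ≤ ∑ k ∈ c'.support, ‖c' k‖ := torusEvol_norm_le n c' t x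
    exact mul_le_mul (mul_le_mul_of_nonneg_left h1 hq0.le) h2 (norm_nonneg _) (by positivity)
  -- integrability on products
  have hBmeas : Continuous (fun z : ℝ × (Fin n → ℝ) =>
      q * ‖torusEvol n c z.1 z.2‖ ^ (q - 1) * ‖torusEvol n c' z.1 z.2‖) :=
    (continuous_const.mul ((hu_cont.norm).rpow_const fun z => Or.inr (by linarith))).mul
      hv_cont.norm
  have hBprod : Integrable (fun z : ℝ × (Fin n → ℝ) =>
      q * ‖torusEvol n c z.1 z.2‖ ^ (q - 1) * ‖torusEvol n c' z.1 z.2‖)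
      ((volume.restrict (Set.Ioc (0:ℝ) 1)).prod (volume.restrict (torusCube n))) := by
    refine (integrable_const (q * (∑ k ∈ c.support, ‖c k‖) ^ (q-1) *
      (∑ k ∈ c'.support, ‖c' k‖))).mono' hBmeas.aestronglyMeasurable
      (Filter.Eventually.of_forall fun z => ?_)
    rw [Real.norm_eq_abs]; exact hBbd z.1 z.2
  have hBprodswap : Integrable (fun z : (Fin n → ℝ) × ℝ =>
      q * ‖torusEvol n c z.2 z.1‖ ^ (q - 1) * ‖torusEvol n c' z.2 z.1‖)
      ((volume.restrict (torusCube n)).prod (volume.restrict (Set.Ioc (0:ℝ) 1))) := by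
    have hcontsw : Continuous (fun z : (Fin n → ℝ) × ℝ =>
        q * ‖torusEvol n c z.2 z.1‖ ^ (q - 1) * ‖torusEvol n c' z.2 z.1‖) :=
      (continuous_const.mul (((torusEvol_continuous_swap n c).norm).rpow_const
        fun z => Or.inr (by linarith))).mul (torusEvol_continuous_swap n c').norm
    refine (integrable_const (q * (∑ k ∈ c.support, ‖c k‖) ^ (q-1) *
      (∑ k ∈ c'.support, ‖c' k‖))).mono' hcontsw.aestronglyMeasurable
      (Filter.Eventually.of_forall fun z => ?_)
    rw [Real.norm_eq_abs]; exact hBbd z.2 z.1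
  have huqprod : Integrable (fun z : ℝ × (Fin n → ℝ) => ‖torusEvol n c z.1 z.2‖ ^ q)
      ((volume.restrict (Set.Ioc (0:ℝ) 1)).prod (volume.restrict (torusCube n))) := by
    refine (integrable_const ((∑ k ∈ c.support, ‖c k‖) ^ q)).mono'
      ((hu_cont.norm.rpow_const fun z => Or.inr hq0.le).aestronglyMeasurable)
      (Filter.Eventually.of_forall fun z => ?_)
    rw [Real.norm_eq_abs, abs_of_nonneg (by positivity)]
    exact Real.rpow_le_rpow (norm_nonneg _) (torusEvol_norm_le n c z.1 z.2) hq0.le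
  have hvqprod : Integrable (fun z : ℝ × (Fin n → ℝ) => ‖torusEvol n c' z.1 z.2‖ ^ q)
      ((volume.restrict (Set.Ioc (0:ℝ) 1)).prod (volume.restrict (torusCube n))) := by
    refine (integrable_const ((∑ k ∈ c'.support, ‖c' k‖) ^ q)).mono'
      ((hv_cont.norm.rpow_const fun z => Or.inr hq0.le).aestronglyMeasurable)
      (Filter.Eventually.of_forall fun z => ?_)
    rw [Real.norm_eq_abs, abs_of_nonneg (by positivity)]
    exact Real.rpow_le_rpow (norm_nonneg _) (torusEvol_norm_le n c' z.1 z.2) hq0.le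
  -- Fubini swap
  have hswap : (∫ x in torusCube n, ∫ t in Set.Ioc (0:ℝ) 1,
        q * ‖torusEvol n c t x‖ ^ (q - 1) * ‖torusEvol n c' t x‖)
      = ∫ t in Set.Ioc (0:ℝ) 1, ∫ x in torusCube n,
        q * ‖torusEvol n c t x‖ ^ (q - 1) * ‖torusEvol n c' t x‖ :=
    integral_integral_swap hBprodswap
  -- Young + inner monotonicity (in x, for fixed t)
  have hlampos : (0:ℝ) < 4*N^2 := by positivity
  have hInner : ∀ t : ℝ, (∫ x in torusCube n,
        q * ‖torusEvol n c t x‖ ^ (q - 1) * ‖torusEvol n c' t x‖)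
      ≤ (q-1)*(4*N^2)*(∫ x in torusCube n, ‖torusEvol n c t x‖ ^ q)
        + (4*N^2)^(1-q)*(∫ x in torusCube n, ‖torusEvol n c' t x‖ ^ q) := by
    intro t
    have hint1 : Integrable (fun x => q * ‖torusEvol n c t x‖ ^ (q - 1) *
        ‖torusEvol n c' t x‖) (volume.restrict (torusCube n)) := by
      have : Continuous (fun x : Fin n → ℝ => q * ‖torusEvol n c t x‖ ^ (q - 1) *
          ‖torusEvol n c' t x‖) :=
        (continuous_const.mul (((hu_cont_x t).norm).rpow_const
          fun z => Or.inr (by linarith))).mul (hv_cont_x t).norm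
      exact this.continuousOn.integrableOn_compact hcube
    have hintu : Integrable (fun x => ‖torusEvol n c t x‖ ^ q)
        (volume.restrict (torusCube n)) :=
      (((hu_cont_x t).norm.rpow_const fun z =>
        Or.inr hq0.le).continuousOn).integrableOn_compact hcube
    have hintv : Integrable (fun x => ‖torusEvol n c' t x‖ ^ q)
        (volume.restrict (torusCube n)) :=
      (((hv_cont_x t).norm.rpow_const fun z =>
        Or.inr hq0.le).continuousOn).integrableOn_compact hcube
    have hint2 : Integrable (fun x => (q-1)*(4*N^2)*‖torusEvol n c t x‖ ^ q
        + (4*N^2)^(1-q)*‖torusEvol n c' t x‖ ^ q) (volume.restrict (torusCube n)) :=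
      (hintu.const_mul _).add (hintv.const_mul _)
    calc (∫ x in torusCube n, q * ‖torusEvol n c t x‖ ^ (q - 1) * ‖torusEvol n c' t x‖)
        ≤ ∫ x in torusCube n, ((q-1)*(4*N^2)*‖torusEvol n c t x‖ ^ q
            + (4*N^2)^(1-q)*‖torusEvol n c' t x‖ ^ q) :=
          integral_mono hint1 hint2 (fun x =>
            young_wt (norm_nonneg _) (norm_nonneg _) hlampos hq)
      _ = (q-1)*(4*N^2)*(∫ x in torusCube n, ‖torusEvol n c t x‖ ^ q)
            + (4*N^2)^(1-q)*(∫ x in torusCube n, ‖torusEvol n c' t x‖ ^ q) := by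
          rw [integral_add (hintu.const_mul _) (hintv.const_mul _),
            integral_const_mul, integral_const_mul]
  -- outer monotonicity (in t)
  have hFxint : Integrable (fun t => ∫ x in torusCube n, ‖torusEvol n c t x‖ ^ q)
      (volume.restrict (Set.Ioc (0:ℝ) 1)) := huqprod.integral_prod_left
  have hGxint : Integrable (fun t => ∫ x in torusCube n, ‖torusEvol n c' t x‖ ^ q)
      (volume.restrict (Set.Ioc (0:ℝ) 1)) := hvqprod.integral_prod_left
  have hBtint : Integrable (fun t => ∫ x in torusCube n,
      q * ‖torusEvol n c t x‖ ^ (q - 1) * ‖torusEvol n c' t x‖)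
      (volume.restrict (Set.Ioc (0:ℝ) 1)) := hBprod.integral_prod_left
  have hBtint2 : Integrable (fun t => ∫ x in torusCube n,
      q * ‖torusEvol n c t x‖ ^ (q - 1) * ‖torusEvol n c' t x‖)
      (volume.restrict (Set.Ioc (0:ℝ) 1)) := by exact hBtint
  have hOuter : (∫ t in Set.Ioc (0:ℝ) 1, ∫ x in torusCube n,
        q * ‖torusEvol n c t x‖ ^ (q - 1) * ‖torusEvol n c' t x‖)
      ≤ (q-1)*(4*N^2)*(∫ t in Set.Ioc (0:ℝ) 1, ∫ x in torusCube n, ‖torusEvol n c t x‖ ^ q)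
        + (4*N^2)^(1-q)*(∫ t in Set.Ioc (0:ℝ) 1, ∫ x in torusCube n,
            ‖torusEvol n c' t x‖ ^ q) := by
    calc (∫ t in Set.Ioc (0:ℝ) 1, ∫ x in torusCube n,
          q * ‖torusEvol n c t x‖ ^ (q - 1) * ‖torusEvol n c' t x‖)
        ≤ ∫ t in Set.Ioc (0:ℝ) 1,
            ((q-1)*(4*N^2)*(∫ x in torusCube n, ‖torusEvol n c t x‖ ^ q)
              + (4*N^2)^(1-q)*(∫ x in torusCube n, ‖torusEvol n c' t x‖ ^ q)) :=
          by
            refine integral_mono hBtint2 ?_ ?_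
            · exact (hFxint.const_mul _).add (hGxint.const_mul _)
            · exact hInner
      _ = _ := by
          rw [integral_add (hFxint.const_mul _) (hGxint.const_mul _),
            integral_const_mul, integral_const_mul]
  -- Strichartz hypothesis
  have hroot : ∀ {X Y : ℝ}, 0 ≤ X → X ^ (1/q) ≤ Y → X ≤ Y ^ q := by
    intro X Y hX h
    have h2 := Real.rpow_le_rpow (Real.rpow_nonneg hX _) h hq0.le
    rwa [one_div, Real.rpow_inv_rpow hX hq0'] at h2
  have hIunn : 0 ≤ ∫ t in Set.Ioc (0:ℝ) 1, ∫ x in torusCube n, ‖torusEvol n c t x‖ ^ q :=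
    integral_nonneg fun t => integral_nonneg fun x => by positivity
  have hIvnn : 0 ≤ ∫ t in Set.Ioc (0:ℝ) 1, ∫ x in torusCube n, ‖torusEvol n c' t x‖ ^ q :=
    integral_nonneg fun t => integral_nonneg fun x => by positivity
  have hIu : (∫ t in Set.Ioc (0:ℝ) 1, ∫ x in torusCube n, ‖torusEvol n c t x‖ ^ q)
      ≤ (A*l2)^q := hroot hIunn (hS c hc)
  have hIv : (∫ t in Set.Ioc (0:ℝ) 1, ∫ x in torusCube n, ‖torusEvol n c' t x‖ ^ q)
      ≤ ((4*N^2)*(A*l2))^q := by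
    refine hroot hIvnn ((hS c' hc').trans ?_)
    calc A * (∑ k ∈ c'.support, ‖c' k‖ ^ 2) ^ ((1:ℝ)/2) ≤ A * (4*N^2*l2) :=
          mul_le_mul_of_nonneg_left hl2' hA.le
      _ = (4*N^2)*(A*l2) := by ring
  -- integral of the maximal bound
  have hFqnn : 0 ≤ ∫ x in torusCube n, ‖torusEvol n c 0 x‖ ^ q :=
    integral_nonneg fun x => by positivity
  have hmain : (∫ x in torusCube n, torusMax n c x ^ q)
      ≤ (∫ x in torusCube n, ‖torusEvol n c 0 x‖ ^ q) + 4*q*N^2*(A*l2)^q := by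
    have hKcont : Continuous (fun x : Fin n → ℝ => ∫ s in (0:ℝ)..1,
        q * ‖torusEvol n c s x‖ ^ (q - 1) * ‖torusEvol n c' s x‖) := by
      refine intervalIntegral.continuous_parametric_intervalIntegral_of_continuous' ?_ 0 1
      exact (continuous_const.mul (((torusEvol_continuous_swap n c).norm).rpow_const
        fun z => Or.inr (by linarith))).mul (torusEvol_continuous_swap n c').norm
    have hf0int : Integrable (fun x => ‖torusEvol n c 0 x‖ ^ q)
        (volume.restrict (torusCube n)) :=
      (((hu_cont_x 0).norm.rpow_const fun z =>
        Or.inr hq0.le).continuousOn).integrableOn_compact hcube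
    have hKint : Integrable (fun x : Fin n → ℝ => ∫ s in (0:ℝ)..1,
        q * ‖torusEvol n c s x‖ ^ (q - 1) * ‖torusEvol n c' s x‖)
        (volume.restrict (torusCube n)) :=
      hKcont.continuousOn.integrableOn_compact hcube
    have h1 : (∫ x in torusCube n, torusMax n c x ^ q)
        ≤ ∫ x in torusCube n, (‖torusEvol n c 0 x‖ ^ q + ∫ s in (0:ℝ)..1,
            q * ‖torusEvol n c s x‖ ^ (q - 1) * ‖torusEvol n c' s x‖) :=
      integral_mono_of_nonneg
        (Filter.Eventually.of_forall fun x => Real.rpow_nonneg (hmax_nonneg x) q)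
        (hf0int.add hKint) (Filter.Eventually.of_forall hmaxq)
    have h2 : (∫ x in torusCube n, (‖torusEvol n c 0 x‖ ^ q + ∫ s in (0:ℝ)..1,
          q * ‖torusEvol n c s x‖ ^ (q - 1) * ‖torusEvol n c' s x‖))
        = (∫ x in torusCube n, ‖torusEvol n c 0 x‖ ^ q)
          + ∫ x in torusCube n, ∫ s in (0:ℝ)..1,
            q * ‖torusEvol n c s x‖ ^ (q - 1) * ‖torusEvol n c' s x‖ :=
      integral_add hf0int hKint
    have h3 : (∫ x in torusCube n, ∫ s in (0:ℝ)..1,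
          q * ‖torusEvol n c s x‖ ^ (q - 1) * ‖torusEvol n c' s x‖)
        = ∫ x in torusCube n, ∫ t in Set.Ioc (0:ℝ) 1,
          q * ‖torusEvol n c t x‖ ^ (q - 1) * ‖torusEvol n c' t x‖ :=
      integral_congr_ae (Filter.Eventually.of_forall fun x =>
        intervalIntegral.integral_of_le zero_le_one)
    have h4 : (q-1)*(4*N^2)*(A*l2)^q + (4*N^2)^(1-q)*((4*N^2)*(A*l2))^q
        = 4*q*N^2*(A*l2)^q := by
      rw [Real.mul_rpow hlampos.le (by positivity),
        show (4*N^2)^(1-q)*((4*N^2)^q*(A*l2)^q) = ((4*N^2)^(1-q)*(4*N^2)^q)*(A*l2)^q by ring,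
        ← Real.rpow_add hlampos, show (1:ℝ)-q+q = 1 by ring, Real.rpow_one]
      ring
    have hc1 : (q-1)*(4*N^2)*(∫ t in Set.Ioc (0:ℝ) 1, ∫ x in torusCube n,
          ‖torusEvol n c t x‖ ^ q) ≤ (q-1)*(4*N^2)*(A*l2)^q :=
      mul_le_mul_of_nonneg_left hIu (mul_nonneg (by linarith) hlampos.le)
    have hc2 : (4*N^2)^(1-q)*(∫ t in Set.Ioc (0:ℝ) 1, ∫ x in torusCube n,
          ‖torusEvol n c' t x‖ ^ q) ≤ (4*N^2)^(1-q)*((4*N^2)*(A*l2))^q :=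
      mul_le_mul_of_nonneg_left hIv (Real.rpow_nonneg hlampos.le _)
    rw [h2, h3, hswap] at h1
    linarith [hOuter, hc1, hc2, h1, h4]
  -- final numerics
  have hLHSnn : 0 ≤ ∫ x in torusCube n, torusMax n c x ^ q :=
    integral_nonneg fun x => Real.rpow_nonneg (hmax_nonneg x) q
  have hfinal1 : (∫ x in torusCube n, torusMax n c x ^ q) ^ (1/q)
      ≤ ((∫ x in torusCube n, ‖torusEvol n c 0 x‖ ^ q) + 4*q*N^2*(A*l2)^q) ^ (1/q) :=
    Real.rpow_le_rpow hLHSnn hmain (by positivity)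
  have hsplit : ((∫ x in torusCube n, ‖torusEvol n c 0 x‖ ^ q) + 4*q*N^2*(A*l2)^q) ^ (1/q)
      ≤ (∫ x in torusCube n, ‖torusEvol n c 0 x‖ ^ q) ^ (1/q) + (4*q*N^2*(A*l2)^q) ^ (1/q) :=
    rpow_add_le hFqnn (by positivity) (by positivity)
      (by rw [div_le_one hq0]; linarith)
  have hterm : (4*q*N^2*(A*l2)^q) ^ (1/q) = (4*q)^(1/q) * N^(2/q) * (A*l2) := by
    have e1 : ((A*l2)^q)^((1:ℝ)/q) = A*l2 := by
      rw [one_div, Real.rpow_rpow_inv (by positivity) hq0']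
    have e2 : ((N:ℝ)^2)^((1:ℝ)/q) = N^(2/q) := by
      rw [← Real.rpow_natCast N 2, ← Real.rpow_mul hN0.le,
        show ((2:ℕ):ℝ) * (1/q) = 2/q by push_cast; ring]
    rw [show 4*q*N^2*(A*l2)^q = (4*q)*(N^2)*((A*l2)^q) by ring,
      Real.mul_rpow (by positivity) (by positivity),
      Real.mul_rpow (by positivity) (by positivity), e1, e2]
  have hC1 : (1:ℝ) ≤ (4*q)^(1/q) := Real.one_le_rpow (by linarith) (by positivity)
  have hXnn : 0 ≤ N^(2/q) * A * l2 := by positivity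
  have hYnn : 0 ≤ (∫ x in torusCube n, ‖torusEvol n c 0 x‖ ^ q) ^ (1/q) :=
    Real.rpow_nonneg hFqnn _
  calc (∫ x in torusCube n, torusMax n c x ^ q) ^ (1/q)
      ≤ (4*q)^(1/q) * N^(2/q) * (A*l2)
        + (∫ x in torusCube n, ‖torusEvol n c 0 x‖ ^ q) ^ (1/q) := by
        rw [← hterm]; linarith [hfinal1, hsplit]
    _ ≤ ((4*q)^(1/q) + 1) * (N^(2/q) * A * l2
        + (∫ x in torusCube n, ‖torusEvol n c 0 x‖ ^ q) ^ (1/q)) := by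
        nlinarith [hC1, hXnn, hYnn]
end

section
/- Strichartz estimate on the circle, L⁶ version (Lemma 6.2, after Bourgain): For every s > 0 there is a constant C = C(s) such that for every finitely supported c : ℤ → ℂ, the evolution u(t,x) = Σ_{k∈ℤ} e^{itk²} c_k e^{ikx} satisfies ‖u‖_{L⁶((0,1] × [0,2π], dt dx)} ≤ C (Σ_{k∈ℤ} (1+k²)^s |c_k|²)^{1/2}. -/
open MeasureTheory Finset

/-- The free Schrödinger evolution `u(t,x) = ∑ₖ e^{itk²} cₖ e^{ikx}` of the trigonometric
polynomial with finitely supported Fourier coefficients `c : ℤ → ℂ`. -/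
noncomputable def circleEvol (c : ℤ →₀ ℂ) (t : ℝ) (x : ℝ) : ℂ :=
  ∑ k ∈ c.support,
    Complex.exp (Complex.I * (t : ℂ) * (k : ℂ) ^ 2) * c k *
      Complex.exp (Complex.I * (k : ℂ) * (x : ℂ))



open Finset

/-- Eisenstein integers: `re + im * ω` where `ω = e^{iπ/3}`, so `ω² = ω - 1`. -/
structure Eis where
  re : ℤ
  im : ℤ
  deriving DecidableEq

namespace Eis

@[ext] theorem ext' : ∀ {z w : Eis}, z.re = w.re → z.im = w.im → z = w
  | ⟨_, _⟩, ⟨_, _⟩, rfl, rfl => rfl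

instance : Zero Eis := ⟨⟨0, 0⟩⟩
instance : One Eis := ⟨⟨1, 0⟩⟩
instance : Add Eis := ⟨fun z w => ⟨z.re + w.re, z.im + w.im⟩⟩
instance : Neg Eis := ⟨fun z => ⟨-z.re, -z.im⟩⟩
instance : Mul Eis :=
  ⟨fun z w => ⟨z.re * w.re - z.im * w.im, z.re * w.im + z.im * w.re + z.im * w.im⟩⟩

@[simp] theorem zero_re : (0 : Eis).re = 0 := rfl
@[simp] theorem zero_im : (0 : Eis).im = 0 := rfl
@[simp] theorem one_re : (1 : Eis).re = 1 := rfl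
@[simp] theorem one_im : (1 : Eis).im = 0 := rfl
@[simp] theorem add_re (z w : Eis) : (z + w).re = z.re + w.re := rfl
@[simp] theorem add_im (z w : Eis) : (z + w).im = z.im + w.im := rfl
@[simp] theorem neg_re (z : Eis) : (-z).re = -z.re := rfl
@[simp] theorem neg_im (z : Eis) : (-z).im = -z.im := rfl
@[simp] theorem mul_re (z w : Eis) : (z * w).re = z.re * w.re - z.im * w.im := rfl
@[simp] theorem mul_im (z w : Eis) :
    (z * w).im = z.re * w.im + z.im * w.re + z.im * w.im := rfl

instance addCommGroup : AddCommGroup Eis := by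
  refine
  { add := (· + ·)
    zero := (0 : Eis)
    sub := fun a b => a + -b
    neg := Neg.neg
    nsmul := @nsmulRec Eis ⟨0⟩ ⟨(· + ·)⟩
    zsmul := @zsmulRec Eis ⟨0⟩ ⟨(· + ·)⟩ ⟨Neg.neg⟩ (@nsmulRec Eis ⟨0⟩ ⟨(· + ·)⟩)
    add_assoc := ?_
    zero_add := ?_
    add_zero := ?_
    neg_add_cancel := ?_
    add_comm := ?_ } <;>
  intros <;> ext <;> simp <;> ring

@[simp] theorem sub_re (z w : Eis) : (z - w).re = z.re - w.re := rfl
@[simp] theorem sub_im (z w : Eis) : (z - w).im = z.im - w.im := rfl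

instance addGroupWithOne : AddGroupWithOne Eis :=
  { Eis.addCommGroup with
    natCast := fun n => ⟨n, 0⟩
    intCast := fun n => ⟨n, 0⟩
    one := 1 }

instance commRing : CommRing Eis := by
  refine
  { Eis.addGroupWithOne with
    mul := (· * ·)
    npow := @npowRec Eis ⟨1⟩ ⟨(· * ·)⟩,
    add_comm := ?_
    left_distrib := ?_
    right_distrib := ?_
    zero_mul := ?_
    mul_zero := ?_
    mul_assoc := ?_
    one_mul := ?_
    mul_one := ?_
    mul_comm := ?_ } <;>
  intros <;> ext <;> simp <;> ring

@[simp] theorem natCast_re (n : ℕ) : (n : Eis).re = n := rfl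
@[simp] theorem natCast_im (n : ℕ) : (n : Eis).im = 0 := rfl
@[simp] theorem intCast_re (n : ℤ) : (n : Eis).re = n := rfl
@[simp] theorem intCast_im (n : ℤ) : (n : Eis).im = 0 := rfl

instance : Nontrivial Eis :=
  ⟨⟨0, 1, by decide⟩⟩

/-- Conjugation. -/
def conj (z : Eis) : Eis := ⟨z.re + z.im, -z.im⟩

/-- The norm `a² + ab + b²`. -/
def norm (z : Eis) : ℤ := z.re * z.re + z.re * z.im + z.im * z.im

theorem norm_def (z : Eis) : norm z = z.re * z.re + z.re * z.im + z.im * z.im := rfl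

theorem mul_conj (z : Eis) : z * conj z = (norm z : Eis) := by
  ext <;> simp [conj, norm] <;> ring

theorem norm_mul (z w : Eis) : norm (z * w) = norm z * norm w := by
  simp [norm]; ring

theorem norm_nonneg (z : Eis) : 0 ≤ norm z := by
  have : 4 * norm z = (2 * z.re + z.im) ^ 2 + 3 * z.im ^ 2 := by simp [norm]; ring
  nlinarith [sq_nonneg (2 * z.re + z.im), sq_nonneg z.im]

theorem norm_eq_zero_iff {z : Eis} : norm z = 0 ↔ z = 0 := by
  constructor
  · intro h
    have h4 : (2 * z.re + z.im) ^ 2 + 3 * z.im ^ 2 = 0 := by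
      have : 4 * norm z = (2 * z.re + z.im) ^ 2 + 3 * z.im ^ 2 := by simp [norm]; ring
      omega
    have him : z.im = 0 := by nlinarith [sq_nonneg (2 * z.re + z.im), sq_nonneg z.im]
    have hre : z.re = 0 := by nlinarith [sq_nonneg (2 * z.re + z.im), sq_nonneg z.im]
    ext <;> simp [hre, him]
  · rintro rfl; simp [norm]

theorem norm_pos {z : Eis} (hz : z ≠ 0) : 0 < norm z :=
  lt_of_le_of_ne (norm_nonneg z) (fun h => hz (norm_eq_zero_iff.mp h.symm))

@[simp] theorem norm_one : norm (1 : Eis) = 1 := by simp [norm]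

theorem norm_natCast (n : ℕ) : norm (n : Eis) = n * n := by simp [norm]

/-- The natural-number norm. -/
def natNorm (z : Eis) : ℕ := (norm z).natAbs

theorem natNorm_mul (z w : Eis) : natNorm (z * w) = natNorm z * natNorm w := by
  simp [natNorm, norm_mul, Int.natAbs_mul]

@[simp] theorem natNorm_one : natNorm (1 : Eis) = 1 := by simp [natNorm]

theorem natCast_natNorm (z : Eis) : (natNorm z : ℤ) = norm z :=
  Int.natAbs_of_nonneg (norm_nonneg z)

theorem natNorm_natCast (n : ℕ) : natNorm (n : Eis) = n * n := by
  simp [natNorm, norm_natCast, Int.natAbs_mul]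

theorem natNorm_eq_zero_iff {z : Eis} : natNorm z = 0 ↔ z = 0 := by
  rw [natNorm, Int.natAbs_eq_zero, norm_eq_zero_iff]

/-- rounding division of integers -/
def rdiv (p n : ℤ) : ℤ := round ((p : ℚ) / (n : ℚ))

instance : Div Eis :=
  ⟨fun x y =>
    ⟨rdiv (x * conj y).re (norm y), rdiv (x * conj y).im (norm y)⟩⟩

theorem div_def (x y : Eis) :
    x / y = ⟨rdiv (x * conj y).re (norm y), rdiv (x * conj y).im (norm y)⟩ := rfl

instance : Mod Eis := ⟨fun x y => x - y * (x / y)⟩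

theorem mod_def (x y : Eis) : x % y = x - y * (x / y) := rfl

theorem abs_sub_rdiv_mul (p n : ℤ) (hn : 0 < n) : |(p - n * rdiv p n : ℚ)| ≤ (n : ℚ) / 2 := by
  have hn' : (0:ℚ) < (n:ℚ) := by exact_mod_cast hn
  have h := abs_sub_round ((p : ℚ) / (n : ℚ))
  have : (p - n * rdiv p n : ℚ) = ((p:ℚ)/(n:ℚ) - round ((p:ℚ)/(n:ℚ))) * n := by
    rw [rdiv, sub_mul, div_mul_cancel₀ _ hn'.ne']; ring
  rw [this, abs_mul, abs_of_pos hn']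
  calc |(p:ℚ)/(n:ℚ) - round ((p:ℚ)/(n:ℚ))| * n ≤ (1/2) * n := by
        apply mul_le_mul_of_nonneg_right h (le_of_lt hn')
    _ = (n:ℚ)/2 := by ring

theorem norm_conj (z : Eis) : norm (conj z) = norm z := by
  simp [norm, conj]; ring

theorem norm_mod_lt (x : Eis) {y : Eis} (hy : y ≠ 0) : norm (x % y) < norm y := by
  have hn : 0 < norm y := norm_pos hy
  have key : (x % y) * conj y = x * conj y - (norm y : Eis) * (x / y) := by
    rw [mod_def, sub_mul]
    congr 1
    calc y * (x / y) * conj y = (y * conj y) * (x / y) := by ring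
      _ = (norm y : Eis) * (x / y) := by rw [mul_conj]
  have hre : ((x % y) * conj y).re
      = (x * conj y).re - norm y * rdiv (x * conj y).re (norm y) := by
    rw [key, div_def]; simp
  have him : ((x % y) * conj y).im
      = (x * conj y).im - norm y * rdiv (x * conj y).im (norm y) := by
    rw [key, div_def]; simp
  have hbre : |(((x % y) * conj y).re : ℚ)| ≤ (norm y : ℚ) / 2 := by
    rw [hre]; push_cast
    exact_mod_cast abs_sub_rdiv_mul (x * conj y).re (norm y) hn
  have hbim : |(((x % y) * conj y).im : ℚ)| ≤ (norm y : ℚ) / 2 := by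
    rw [him]; push_cast
    exact_mod_cast abs_sub_rdiv_mul (x * conj y).im (norm y) hn
  set a : ℚ := (((x % y) * conj y).re : ℚ) with ha
  set b : ℚ := (((x % y) * conj y).im : ℚ) with hb
  have hnormr : (norm ((x % y) * conj y) : ℚ) ≤ 3 / 4 * (norm y : ℚ) ^ 2 := by
    have hval : (norm ((x % y) * conj y) : ℚ) = a * a + a * b + b * b := by
      rw [norm_def]; push_cast; ring
    rw [hval]
    nlinarith [abs_nonneg a, abs_nonneg b, neg_abs_le a, le_abs_self a,
      neg_abs_le b, le_abs_self b, sq_abs a, sq_abs b,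
      mul_le_mul hbre hbim (abs_nonneg _) (by positivity : (0:ℚ) ≤ (norm y : ℚ)/2),
      abs_mul a b, neg_abs_le (a*b), le_abs_self (a*b)]
  have hmul : norm (x % y) * norm y = norm ((x % y) * conj y) := by
    rw [norm_mul, norm_conj]
  have hny : (0:ℚ) < (norm y : ℚ) := by exact_mod_cast hn
  have hq2 : (norm (x % y) : ℚ) * (norm y : ℚ) < (norm y : ℚ) * (norm y : ℚ) := by
    have h1 : (norm (x % y) : ℚ) * (norm y : ℚ) = (norm ((x % y) * conj y) : ℚ) := by
      exact_mod_cast hmul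
    nlinarith
  have := lt_of_mul_lt_mul_right hq2 hny.le
  exact_mod_cast this

theorem natNorm_mod_lt (x : Eis) {y : Eis} (hy : y ≠ 0) : natNorm (x % y) < natNorm y := by
  have := norm_mod_lt x hy
  have h1 := natCast_natNorm (x % y)
  have h2 := natCast_natNorm y
  omega

theorem natNorm_le_natNorm_mul_left (x : Eis) {y : Eis} (hy : y ≠ 0) :
    natNorm x ≤ natNorm (x * y) := by
  rw [natNorm_mul]
  have : 1 ≤ natNorm y := by
    have := norm_pos hy
    have := natCast_natNorm y
    omega
  exact Nat.le_mul_of_pos_right _ (by omega)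

instance : EuclideanDomain Eis :=
  { Eis.commRing, (inferInstance : Nontrivial Eis) with
    quotient := (· / ·)
    remainder := (· % ·)
    quotient_zero := fun x => by
      change x / 0 = 0
      ext <;> simp [div_def, conj, norm, rdiv]
    quotient_mul_add_remainder_eq := fun x y => by
      change y * (x / y) + (x - y * (x / y)) = x; ring
    r := fun a b => natNorm a < natNorm b
    r_wellFounded := (measure natNorm).wf
    remainder_lt := fun x y hy => natNorm_mod_lt x hy
    mul_left_not_lt := fun a b hb0 => not_lt_of_ge (natNorm_le_natNorm_mul_left a hb0) }

end Eis
namespace Eis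

open UniqueFactorizationMonoid

noncomputable instance : NormalizationMonoid Eis :=
  UniqueFactorizationMonoid.strongNormalizationMonoid.toNormalizationMonoid

@[simp] theorem intCast_natCast (n : ℕ) : (((n : ℤ)) : Eis) = (n : Eis) := by
  ext <;> simp

theorem natCast_ne_zero {M : ℕ} (hM : M ≠ 0) : ((M : ℕ) : Eis) ≠ 0 := by
  intro h
  have := congrArg Eis.re h
  simp at this
  exact hM this

/-- The normalized factors of `M` in the Eisenstein integers. -/
noncomputable def nf (M : ℕ) : Multiset Eis := normalizedFactors ((M : ℕ) : Eis)

/-- The six units. -/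
def unitsFinset : Finset Eis := {⟨1,0⟩, ⟨-1,0⟩, ⟨0,1⟩, ⟨0,-1⟩, ⟨1,-1⟩, ⟨-1,1⟩}

theorem card_unitsFinset : unitsFinset.card ≤ 6 := by decide

theorem mem_unitsFinset_of_norm_eq_one {z : Eis} (h : norm z = 1) : z ∈ unitsFinset := by
  obtain ⟨a, b⟩ := z
  have h' : a * a + a * b + b * b = 1 := h
  have hb1 : -1 ≤ b := by nlinarith [sq_nonneg (2*a+b), sq_nonneg (b+1), sq_nonneg (b-1)]
  have hb2 : b ≤ 1 := by nlinarith [sq_nonneg (2*a+b), sq_nonneg (b+1), sq_nonneg (b-1)]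
  have ha1 : -1 ≤ a := by nlinarith [sq_nonneg (a+2*b), sq_nonneg (a+1), sq_nonneg (a-1)]
  have ha2 : a ≤ 1 := by nlinarith [sq_nonneg (a+2*b), sq_nonneg (a+1), sq_nonneg (a-1)]
  interval_cases a <;> interval_cases b <;> first
    | (exfalso; omega)
    | decide

theorem isUnit_of_natNorm_one {z : Eis} (h : natNorm z = 1) : IsUnit z := by
  have hn : norm z = 1 := by
    have := natCast_natNorm z
    omega
  apply IsUnit.of_mul_eq_one (conj z)
  rw [mul_conj, hn]
  norm_num

theorem natNorm_unit (u : Eisˣ) : natNorm (u : Eis) = 1 := by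
  have h : natNorm (u : Eis) * natNorm ((u⁻¹ : Eisˣ) : Eis) = 1 := by
    rw [← natNorm_mul]
    simp
  exact Nat.eq_one_of_mul_eq_one_right h

theorem conj_ne_zero {z : Eis} (hz : z ≠ 0) : conj z ≠ 0 := by
  intro h
  apply hz
  have : norm (conj z) = 0 := by rw [h]; simp [norm]
  rw [norm_conj] at this
  exact norm_eq_zero_iff.mp this

theorem two_le_natNorm_of_mem_nf {M : ℕ} {p : Eis} (hp : p ∈ nf M) : 2 ≤ natNorm p := by
  have hprime : Prime p := prime_of_normalized_factor p hp
  have h0 : natNorm p ≠ 0 := fun h => hprime.ne_zero (natNorm_eq_zero_iff.mp h)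
  have h1 : natNorm p ≠ 1 := fun h => hprime.not_unit (isUnit_of_natNorm_one h)
  omega

theorem card_le_six_mul (M : ℕ) (hM : M ≠ 0) (F : Finset Eis)
    (hF : ∀ z ∈ F, natNorm z = M) :
    F.card ≤ 6 * ∏ p ∈ (nf M).toFinset, ((nf M).count p + 1) := by
  classical
  have hMe : ((M : ℕ) : Eis) ≠ 0 := natCast_ne_zero hM
  have hz0 : ∀ z ∈ F, z ≠ 0 := by
    intro z hz h0
    apply hM
    rw [← hF z hz, h0]
    simp [natNorm, norm]
  have hzdvd : ∀ z ∈ F, z ∣ ((M : ℕ) : Eis) := by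
    intro z hz
    refine ⟨conj z, ?_⟩
    have h1 : norm z = (M : ℤ) := by
      rw [← natCast_natNorm, hF z hz]
    symm
    rw [mul_conj z, h1, intCast_natCast]
  set Φ : Eis → Multiset Eis := fun z => normalizedFactors z with hΦ
  have himg : ∀ s ∈ F.image Φ, s ≤ nf M := by
    intro s hs
    obtain ⟨z, hz, rfl⟩ := Finset.mem_image.mp hs
    exact (dvd_iff_normalizedFactors_le_normalizedFactors (hz0 z hz) hMe).mp (hzdvd z hz)
  refine le_trans (Finset.card_le_mul_card_image (f := Φ) F 6 ?_) ?_
  · intro b hb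
    obtain ⟨z₀, hz₀F, hz₀⟩ := Finset.mem_image.mp hb
    have step : {z ∈ F | Φ z = b}.card ≤
        (unitsFinset.image (fun w => ((M : ℕ) : Eis) * w)).card := by
      apply Finset.card_le_card_of_injOn (fun z => z * conj z₀)
      · intro z hz
        simp only [Finset.mem_coe, Finset.mem_filter] at hz
        obtain ⟨hzF, hzb⟩ := hz
        have h1 : Associated (Φ z₀).prod z₀ := prod_normalizedFactors (hz0 _ hz₀F)
        have h2 : Associated (Φ z).prod z := prod_normalizedFactors (hz0 _ hzF)
        have hfac : Φ z = Φ z₀ := by rw [hzb, hz₀]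
        rw [hfac] at h2
        obtain ⟨u, hu⟩ := h1.symm.trans h2
        refine Finset.mem_image.mpr ⟨(u : Eis), ?_, ?_⟩
        · apply mem_unitsFinset_of_norm_eq_one
          have := natNorm_unit u
          have h3 := natCast_natNorm (u : Eis)
          omega
        · have hzz : z * conj z₀ = (z₀ * conj z₀) * u := by rw [← hu]; ring
          beta_reduce
          rw [hzz, mul_conj]
          have h4 : norm z₀ = (M : ℤ) := by rw [← natCast_natNorm, hF z₀ hz₀F]
          rw [h4, intCast_natCast]
      · intro z hz z' hz' heq
        exact mul_right_cancel₀ (conj_ne_zero (hz0 z₀ hz₀F)) heq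
    refine step.trans (Finset.card_image_le.trans card_unitsFinset)
  · have himgcard : (F.image Φ).card ≤
        ((nf M).toFinset.pi (fun p => Finset.range ((nf M).count p + 1))).card := by
      apply Finset.card_le_card_of_injOn (fun s => fun p _ => Multiset.count p s)
      · intro s hs
        refine Finset.mem_pi.mpr ?_
        intro p hp
        rw [Finset.mem_range, Nat.lt_succ_iff]
        exact Multiset.le_iff_count.mp (himg s hs) p
      · intro s hs s' hs' heq
        have h1 := himg s hs
        have h2 := himg s' hs'
        ext a
        by_cases ha : a ∈ (nf M).toFinset
        · exact congrFun (congrFun heq a) ha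
        · have h0 : (nf M).count a = 0 :=
            Multiset.count_eq_zero.mpr (fun h => ha (Multiset.mem_toFinset.mpr h))
          have hc1 := Multiset.le_iff_count.mp h1 a
          have hc2 := Multiset.le_iff_count.mp h2 a
          omega
    rw [Finset.card_pi] at himgcard
    simp only [Finset.card_range] at himgcard
    exact Nat.mul_le_mul_left 6 himgcard

/-- The natural norm as a monoid hom. -/
def natNormHom : Eis →* ℕ where
  toFun := natNorm
  map_one' := natNorm_one
  map_mul' := natNorm_mul

theorem prod_norm_nf (M : ℕ) (hM : M ≠ 0) :
    ∏ p ∈ (nf M).toFinset, natNorm p ^ (nf M).count p = M * M := by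
  classical
  have hMe : ((M : ℕ) : Eis) ≠ 0 := natCast_ne_zero hM
  have h1 : ((nf M).map natNorm).prod
      = ∏ p ∈ (nf M).toFinset, natNorm p ^ (nf M).count p :=
    Finset.prod_multiset_map_count _ _
  have h2 : ((nf M).map natNorm).prod = natNorm (nf M).prod := by
    rw [show (natNorm : Eis → ℕ) = natNormHom from rfl]
    exact (Multiset.prod_hom _ natNormHom)
  obtain ⟨u, hu⟩ := prod_normalizedFactors hMe
  have h3 : natNorm ((nf M).prod) * natNorm (u : Eis) = natNorm ((M : ℕ) : Eis) := by
    rw [← natNorm_mul, show (nf M) = normalizedFactors ((M : ℕ) : Eis) from rfl, hu]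
  rw [natNorm_unit u, mul_one, natNorm_natCast] at h3
  rw [← h1, h2, h3]

theorem card_small_le (B : ℕ) (hB : 1 ≤ B) (T : Finset Eis) (hT : ∀ p ∈ T, natNorm p ≤ B) :
    T.card ≤ (4 * B + 1) ^ 2 := by
  classical
  have key : T.card ≤
      ((Finset.Icc (-(2 * B : ℤ)) (2 * B)) ×ˢ (Finset.Icc (-(2 * B : ℤ)) (2 * B))).card := by
    apply Finset.card_le_card_of_injOn (fun z => (z.re, z.im))
    · intro z hz
      have h := hT z hz
      have hnorm : norm z ≤ (B : ℤ) := by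
        rw [← natCast_natNorm]
        exact_mod_cast h
      have hBZ : (1 : ℤ) ≤ (B : ℤ) := by exact_mod_cast hB
      have hval : norm z = z.re * z.re + z.re * z.im + z.im * z.im := rfl
      simp only [Finset.mem_coe, Finset.mem_product, Finset.mem_Icc]
      constructor
      · constructor
        · nlinarith [sq_nonneg (z.re + 2 * z.im), sq_nonneg (z.re + 2 * (B:ℤ))]
        · nlinarith [sq_nonneg (z.re + 2 * z.im), sq_nonneg (z.re - 2 * (B:ℤ))]
      · constructor
        · nlinarith [sq_nonneg (2 * z.re + z.im), sq_nonneg (z.im + 2 * (B:ℤ))]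
        · nlinarith [sq_nonneg (2 * z.re + z.im), sq_nonneg (z.im - 2 * (B:ℤ))]
    · intro z hz z' hz' heq
      have h1 : z.re = z'.re := congrArg Prod.fst heq
      have h2 : z.im = z'.im := congrArg Prod.snd heq
      ext <;> assumption
  have hcard : ((Finset.Icc (-(2 * B : ℤ)) (2 * B)) ×ˢ (Finset.Icc (-(2 * B : ℤ)) (2 * B))).card
      = (4 * B + 1) ^ 2 := by
    rw [Finset.card_product, Int.card_Icc]
    have : ((2 * B : ℤ) + 1 - - (2 * B : ℤ)).toNat = 4 * B + 1 := by omega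
    rw [this, sq]
  omega

end Eis

namespace Eis

open UniqueFactorizationMonoid

set_option maxHeartbeats 1000000 in
theorem count_bound (δ : ℝ) (hδ : 0 < δ) :
    ∃ C : ℝ, 1 ≤ C ∧ ∀ M : ℕ, M ≠ 0 → ∀ F : Finset Eis,
      (∀ z ∈ F, natNorm z = M) → (F.card : ℝ) ≤ C * (M : ℝ) ^ δ := by
  classical
  set ε : ℝ := δ / 3 with hε_def
  have hε : 0 < ε := by positivity
  set B : ℕ := max 1 ⌈(2 : ℝ) ^ (1 / ε)⌉₊ with hB_def
  have hB1 : 1 ≤ B := le_max_left _ _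
  have hB2 : (2 : ℝ) ^ (1 / ε) ≤ B := by
    calc (2 : ℝ) ^ (1 / ε) ≤ (⌈(2 : ℝ) ^ (1 / ε)⌉₊ : ℝ) := Nat.le_ceil _
      _ ≤ B := by exact_mod_cast Nat.cast_le.mpr (le_max_right _ _)
  set K : ℕ := (4 * B + 1) ^ 2 with hK_def
  have hK : 0 < K := by positivity
  set η : ℝ := ε / K with hη_def
  have hη : 0 < η := by positivity
  have hlog2 : 0 < Real.log 2 := Real.log_pos (by norm_num)
  set C₀ : ℝ := 1 + 2 / (Real.log 2 * η) with hC₀_def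
  have hC₀ : 1 ≤ C₀ := by
    rw [hC₀_def]
    exact le_add_of_nonneg_right (by positivity)
  have hC₀K : 1 ≤ C₀ ^ K := one_le_pow₀ hC₀
  refine ⟨6 * C₀ ^ K, by linarith, ?_⟩
  intro M hM F hF
  have hM1 : 1 ≤ M := Nat.one_le_iff_ne_zero.mpr hM
  have hMR : (1 : ℝ) ≤ (M : ℝ) := by exact_mod_cast hM1
  have hMR0 : (0 : ℝ) < (M : ℝ) := by linarith
  set T : Finset Eis := (nf M).toFinset with hT_def
  set e : Eis → ℕ := fun p => (nf M).count p with he_def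
  have hA : F.card ≤ 6 * ∏ p ∈ T, (e p + 1) := card_le_six_mul M hM F hF
  have hprod : ∏ p ∈ T, natNorm p ^ e p = M * M := prod_norm_nf M hM
  have htwo : ∀ p ∈ T, 2 ≤ natNorm p := fun p hp =>
    two_le_natNorm_of_mem_nf (Multiset.mem_toFinset.mp hp)
  have hfac_ge1 : ∀ p ∈ T, 1 ≤ natNorm p ^ e p := fun p hp =>
    Nat.one_le_pow _ _ (by have := htwo p hp; omega)
  have hfac_le : ∀ p ∈ T, natNorm p ^ e p ≤ M * M := by
    intro p hp
    rw [← hprod]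
    exact Finset.single_le_prod' hfac_ge1 hp
  -- the main product bound over the reals
  set Ts : Finset Eis := T.filter (fun p => natNorm p ≤ B) with hTs_def
  set Tl : Finset Eis := T.filter (fun p => ¬ natNorm p ≤ B) with hTl_def
  -- large primes
  have hlarge : ∏ p ∈ Tl, ((e p + 1 : ℕ) : ℝ) ≤ ((M : ℝ) ^ (2 : ℕ)) ^ ε := by
    have hstep1 : ∀ p ∈ Tl, ((e p + 1 : ℕ) : ℝ) ≤ ((natNorm p ^ e p : ℕ) : ℝ) ^ ε := by
      intro p hp
      have hpB : B < natNorm p := by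
        have := (Finset.mem_filter.mp hp).2
        omega
      have hx0 : (0 : ℝ) ≤ (natNorm p : ℝ) := by positivity
      have h2 : (2 : ℝ) ≤ (natNorm p : ℝ) ^ ε := by
        have hbase : (2 : ℝ) ^ (1 / ε) ≤ (natNorm p : ℝ) := by
          refine hB2.trans ?_
          exact_mod_cast Nat.cast_le.mpr hpB.le
        calc (2 : ℝ) = ((2 : ℝ) ^ (1 / ε)) ^ ε := by
              rw [← Real.rpow_mul (by norm_num), one_div_mul_cancel hε.ne', Real.rpow_one]
          _ ≤ (natNorm p : ℝ) ^ ε :=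
              Real.rpow_le_rpow (by positivity) hbase hε.le
      have h3 : ((e p + 1 : ℕ) : ℝ) ≤ (2 : ℝ) ^ (e p) := by
        have := Nat.lt_two_pow_self (n := e p)
        exact_mod_cast Nat.succ_le_of_lt this
      have h4 : (2 : ℝ) ^ (e p) ≤ ((natNorm p : ℝ) ^ ε) ^ (e p) :=
        pow_le_pow_left₀ (by norm_num) h2 _
      have h5 : ((natNorm p : ℝ) ^ ε) ^ (e p) = ((natNorm p : ℝ) ^ (e p)) ^ ε := by
        rw [← Real.rpow_natCast ((natNorm p : ℝ) ^ ε) (e p), ← Real.rpow_mul hx0,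
          mul_comm, Real.rpow_mul hx0, Real.rpow_natCast]
      calc ((e p + 1 : ℕ) : ℝ) ≤ (2 : ℝ) ^ (e p) := h3
        _ ≤ ((natNorm p : ℝ) ^ ε) ^ (e p) := h4
        _ = ((natNorm p : ℝ) ^ (e p)) ^ ε := h5
        _ = ((natNorm p ^ e p : ℕ) : ℝ) ^ ε := by push_cast; ring_nf
    calc ∏ p ∈ Tl, ((e p + 1 : ℕ) : ℝ)
        ≤ ∏ p ∈ Tl, ((natNorm p ^ e p : ℕ) : ℝ) ^ ε := by
          refine Finset.prod_le_prod ?_ hstep1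
          intro p hp; positivity
      _ = (∏ p ∈ Tl, ((natNorm p ^ e p : ℕ) : ℝ)) ^ ε :=
          Real.finset_prod_rpow Tl _ (fun p _ => by positivity) ε
      _ ≤ ((M : ℝ) ^ (2 : ℕ)) ^ ε := by
          refine Real.rpow_le_rpow (by positivity) ?_ hε.le
          have hsub : ∏ p ∈ Tl, ((natNorm p ^ e p : ℕ) : ℝ)
              ≤ ∏ p ∈ T, ((natNorm p ^ e p : ℕ) : ℝ) := by
            have hsplitR : (∏ p ∈ Ts, ((natNorm p ^ e p : ℕ) : ℝ))
                * (∏ p ∈ Tl, ((natNorm p ^ e p : ℕ) : ℝ))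
                = ∏ p ∈ T, ((natNorm p ^ e p : ℕ) : ℝ) := by
              rw [hTs_def, hTl_def]
              exact Finset.prod_filter_mul_prod_filter_not T _ _
            rw [← hsplitR]
            have h1 : (1:ℝ) ≤ ∏ p ∈ Ts, ((natNorm p ^ e p : ℕ) : ℝ) := by
              calc (1:ℝ) = ∏ _p ∈ Ts, (1:ℝ) := by rw [Finset.prod_const_one]
                _ ≤ ∏ p ∈ Ts, ((natNorm p ^ e p : ℕ) : ℝ) := by
                  refine Finset.prod_le_prod (fun _ _ => by norm_num) ?_
                  intro p hp
                  have := hfac_ge1 p (Finset.mem_filter.mp hp).1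
                  exact_mod_cast this
            have h2 : (0:ℝ) ≤ ∏ p ∈ Tl, ((natNorm p ^ e p : ℕ) : ℝ) := by positivity
            nlinarith
          refine hsub.trans (le_of_eq ?_)
          rw [← Nat.cast_prod, hprod]
          push_cast; ring
  -- small primes
  have hsmall : ∏ p ∈ Ts, ((e p + 1 : ℕ) : ℝ) ≤ (C₀ * (M : ℝ) ^ η) ^ K := by
    have hcardTs : Ts.card ≤ K := by
      refine card_small_le B hB1 Ts ?_
      intro p hp
      exact (Finset.mem_filter.mp hp).2
    have hfactor : ∀ p ∈ Ts, ((e p + 1 : ℕ) : ℝ) ≤ C₀ * (M : ℝ) ^ η := by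
      intro p hp
      have hpT : p ∈ T := (Finset.mem_filter.mp hp).1
      have h2e : (2 : ℕ) ^ (e p) ≤ M * M := by
        calc (2 : ℕ) ^ (e p) ≤ natNorm p ^ e p :=
            Nat.pow_le_pow_left (htwo p hpT) _
          _ ≤ M * M := hfac_le p hpT
      have h2eR : (2 : ℝ) ^ (e p) ≤ (M : ℝ) ^ (2 : ℕ) := by
        have : ((2 ^ e p : ℕ) : ℝ) ≤ ((M * M : ℕ) : ℝ) := by exact_mod_cast h2e
        push_cast at this
        calc (2:ℝ) ^ e p ≤ (M:ℝ) * M := this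
          _ = (M:ℝ) ^ (2:ℕ) := by ring
      have hlogs : (e p : ℝ) * Real.log 2 ≤ 2 * Real.log M := by
        have := Real.log_le_log (by positivity) h2eR
        rwa [Real.log_pow, Real.log_pow, Nat.cast_ofNat] at this
      have hlogM : Real.log M ≤ (M : ℝ) ^ η / η :=
        Real.log_le_rpow_div (by positivity) hη
      have hMη1 : (1 : ℝ) ≤ (M : ℝ) ^ η := Real.one_le_rpow hMR hη.le
      have hEp0 : (e p : ℝ) * (Real.log 2 * η) ≤ 2 * (M : ℝ) ^ η := by
        calc (e p : ℝ) * (Real.log 2 * η) = ((e p : ℝ) * Real.log 2) * η := by ring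
          _ ≤ (2 * Real.log M) * η := mul_le_mul_of_nonneg_right hlogs hη.le
          _ ≤ (2 * ((M : ℝ) ^ η / η)) * η := by
              have hlogM2 : 2 * Real.log M ≤ 2 * ((M : ℝ) ^ η / η) := by linarith
              exact mul_le_mul_of_nonneg_right hlogM2 hη.le
          _ = 2 * (M : ℝ) ^ η := by field_simp
      have hEp : (e p : ℝ) ≤ (2 / (Real.log 2 * η)) * (M : ℝ) ^ η := by
        rw [div_mul_eq_mul_div, le_div_iff₀ (by positivity)]
        exact hEp0
      push_cast
      calc (e p : ℝ) + 1 ≤ (2 / (Real.log 2 * η)) * (M : ℝ) ^ η + 1 := by linarith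
        _ ≤ (2 / (Real.log 2 * η)) * (M : ℝ) ^ η + 1 * (M : ℝ) ^ η := by nlinarith
        _ = C₀ * (M : ℝ) ^ η := by rw [hC₀_def]; ring
    have hstep : ∏ p ∈ Ts, ((e p + 1 : ℕ) : ℝ) ≤ (C₀ * (M : ℝ) ^ η) ^ Ts.card := by
      calc ∏ p ∈ Ts, ((e p + 1 : ℕ) : ℝ) ≤ ∏ _p ∈ Ts, (C₀ * (M : ℝ) ^ η) :=
          Finset.prod_le_prod (fun _ _ => by positivity) hfactor
        _ = (C₀ * (M : ℝ) ^ η) ^ Ts.card := Finset.prod_const _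
    have hmono : (C₀ * (M : ℝ) ^ η) ^ Ts.card ≤ (C₀ * (M : ℝ) ^ η) ^ K := by
      have hb1 : (1:ℝ) ≤ C₀ * (M : ℝ) ^ η := by
        nlinarith [Real.one_le_rpow hMR hη.le]
      exact pow_le_pow_right₀ hb1 hcardTs
    exact hstep.trans hmono
  -- combine
  have hsplitn : (∏ p ∈ Ts, (e p + 1)) * (∏ p ∈ Tl, (e p + 1)) = ∏ p ∈ T, (e p + 1) :=
    Finset.prod_filter_mul_prod_filter_not T _ _
  have htotal : (∏ p ∈ T, ((e p + 1 : ℕ)) : ℕ) ≤ (C₀ ^ K) * (M : ℝ) ^ δ := by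
    have hcast : ((∏ p ∈ T, (e p + 1) : ℕ) : ℝ)
        = (∏ p ∈ Ts, ((e p + 1 : ℕ) : ℝ)) * (∏ p ∈ Tl, ((e p + 1 : ℕ) : ℝ)) := by
      rw [← hsplitn]; push_cast; ring
    rw [hcast]
    have h1 : (∏ p ∈ Ts, ((e p + 1 : ℕ) : ℝ)) * (∏ p ∈ Tl, ((e p + 1 : ℕ) : ℝ))
        ≤ ((C₀ * (M : ℝ) ^ η) ^ K) * (((M : ℝ) ^ (2 : ℕ)) ^ ε) := by
      refine mul_le_mul hsmall hlarge ?_ ?_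
      · positivity
      · positivity
    refine h1.trans ?_
    have h2 : ((C₀ * (M : ℝ) ^ η) ^ K) = C₀ ^ K * ((M : ℝ) ^ η) ^ K := mul_pow _ _ _
    have h3 : ((M : ℝ) ^ η) ^ K = (M : ℝ) ^ (η * K) := by
      rw [← Real.rpow_natCast ((M : ℝ) ^ η) K, ← Real.rpow_mul (le_of_lt hMR0)]
    have h4 : ((M : ℝ) ^ (2 : ℕ)) ^ ε = (M : ℝ) ^ (2 * ε) := by
      rw [← Real.rpow_natCast (M : ℝ) 2, ← Real.rpow_mul (le_of_lt hMR0)]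
      norm_num
    rw [h2, h3, h4]
    have hηK : η * K = ε := by
      rw [hη_def]
      field_simp
    rw [hηK, mul_assoc, ← Real.rpow_add hMR0]
    have : ε + 2 * ε = δ := by rw [hε_def]; ring
    rw [this]
  calc (F.card : ℝ) ≤ ((6 * ∏ p ∈ T, (e p + 1) : ℕ) : ℝ) := by exact_mod_cast hA
    _ = 6 * ((∏ p ∈ T, (e p + 1) : ℕ) : ℝ) := by push_cast; ring
    _ ≤ 6 * ((C₀ ^ K) * (M : ℝ) ^ δ) := by
        refine mul_le_mul_of_nonneg_left htotal (by norm_num)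
    _ = 6 * C₀ ^ K * (M : ℝ) ^ δ := by ring

end Eis

namespace SA
open MeasureTheory Finset Complex

def QQ (a : ℤ × ℤ × ℤ) : ℤ := a.1 + a.2.1 + a.2.2
def PP (a : ℤ × ℤ × ℤ) : ℤ := a.1 ^ 2 + a.2.1 ^ 2 + a.2.2 ^ 2
def keyF (a : ℤ × ℤ × ℤ) : ℤ × ℤ := (QQ a, PP a)
noncomputable def CC (c : ℤ →₀ ℂ) (a : ℤ × ℤ × ℤ) : ℂ := c a.1 * c a.2.1 * c a.2.2
noncomputable def T3 (c : ℤ →₀ ℂ) : Finset (ℤ × ℤ × ℤ) := c.support ×ˢ c.support ×ˢ c.support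
noncomputable def AA (c : ℤ →₀ ℂ) (a : ℤ × ℤ × ℤ) (t x : ℝ) : ℂ :=
  Complex.exp (Complex.I * (t:ℂ) * (PP a : ℂ)) * CC c a *
    Complex.exp (Complex.I * (QQ a : ℂ) * (x:ℂ))
noncomputable def TK (c : ℤ →₀ ℂ) (κ : ℤ × ℤ) : ℂ :=
  ∑ a ∈ (T3 c).filter (fun a => keyF a = κ), CC c a
noncomputable def WW (c : ℤ →₀ ℂ) (t : ℝ) : ℂ :=
  ∑ a ∈ T3 c, ∑ b ∈ T3 c,
    if QQ a = QQ b then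
      Complex.exp (Complex.I * (t:ℂ) * ((PP a - PP b : ℤ):ℂ)) *
        (CC c a * (starRingEnd ℂ) (CC c b))
    else 0

lemma exp_integral_Ioc (d : ℤ) :
    (∫ t in Set.Ioc (0:ℝ) (2*Real.pi), Complex.exp ((Complex.I * (d:ℂ)) * (t:ℂ)))
      = if d = 0 then ((2*Real.pi : ℝ) : ℂ) else 0 := by
  have h0 : (0:ℝ) ≤ 2*Real.pi := by positivity
  split_ifs with h
  · subst h
    simp only [Int.cast_zero, mul_zero, zero_mul, Complex.exp_zero]
    rw [setIntegral_const, Real.volume_real_Ioc_of_le h0]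
    simp [Complex.real_smul]
  · have hI : Complex.I * (d:ℂ) ≠ 0 :=
      mul_ne_zero Complex.I_ne_zero (Int.cast_ne_zero.mpr h)
    rw [← intervalIntegral.integral_of_le h0, integral_exp_mul_complex hI]
    have h2 : Complex.I * (d:ℂ) * ((2*Real.pi:ℝ):ℂ) = (d:ℂ) * (2 * (Real.pi:ℂ) * Complex.I) := by
      push_cast; ring
    rw [h2, Complex.exp_int_mul_two_pi_mul_I]
    simp

lemma exp_integral_Icc (d : ℤ) :
    (∫ x in Set.Icc (0:ℝ) (2*Real.pi), Complex.exp ((Complex.I * (d:ℂ)) * (x:ℂ)))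
      = if d = 0 then ((2*Real.pi : ℝ) : ℂ) else 0 := by
  rw [integral_Icc_eq_integral_Ioc]
  exact exp_integral_Ioc d

lemma term_mul (t x : ℝ) (P1 P2 Q1 Q2 : ℤ) (u v : ℂ) :
    (Complex.exp (Complex.I*(t:ℂ)*(P1:ℂ)) * u * Complex.exp (Complex.I*(Q1:ℂ)*(x:ℂ))) *
      (starRingEnd ℂ) (Complex.exp (Complex.I*(t:ℂ)*(P2:ℂ)) * v *
        Complex.exp (Complex.I*(Q2:ℂ)*(x:ℂ)))
    = Complex.exp (Complex.I*(t:ℂ)*((P1 - P2 : ℤ):ℂ)) * (u * (starRingEnd ℂ) v) *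
        Complex.exp ((Complex.I*((Q1-Q2 : ℤ):ℂ)) * (x:ℂ)) := by
  simp only [map_mul, ← Complex.exp_conj, map_intCast, Complex.conj_I, Complex.conj_ofReal]
  rw [show ((P1 - P2 : ℤ):ℂ) = (P1:ℂ) - (P2:ℂ) by push_cast; ring,
      show ((Q1 - Q2 : ℤ):ℂ) = (Q1:ℂ) - (Q2:ℂ) by push_cast; ring]
  rw [show Complex.I*(t:ℂ)*((P1:ℂ) - (P2:ℂ))
        = Complex.I*(t:ℂ)*(P1:ℂ) + (-Complex.I*(t:ℂ)*(P2:ℂ)) by ring,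
      show (Complex.I*((Q1:ℂ) - (Q2:ℂ))) * (x:ℂ)
        = Complex.I*(Q1:ℂ)*(x:ℂ) + (-Complex.I*(Q2:ℂ)*(x:ℂ)) by ring,
      Complex.exp_add, Complex.exp_add]
  ring


lemma re_setIntegral {f : ℝ → ℂ} {s : Set ℝ} (hf : MeasureTheory.IntegrableOn f s) :
    ∫ x in s, (f x).re = (∫ x in s, f x).re := by
  have h := Complex.reCLM.integral_comp_comm hf
  simpa using h

lemma continuous_AA (c : ℤ →₀ ℂ) (a : ℤ × ℤ × ℤ) :
    Continuous fun p : ℝ × ℝ => AA c a p.1 p.2 := by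
  unfold AA
  fun_prop

lemma cube (c : ℤ →₀ ℂ) (t x : ℝ) :
    (circleEvol c t x) ^ 3 = ∑ a ∈ T3 c, AA c a t x := by
  classical
  have mul3 : ∀ (a1 a2 a3 b1 b2 b3 u1 u2 u3 : ℂ),
      (Complex.exp a1 * u1 * Complex.exp b1) * (Complex.exp a2 * u2 * Complex.exp b2) *
        (Complex.exp a3 * u3 * Complex.exp b3)
      = Complex.exp (a1+a2+a3) * (u1*u2*u3) * Complex.exp (b1+b2+b3) := by
    intros
    rw [Complex.exp_add, Complex.exp_add, Complex.exp_add, Complex.exp_add]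
    ring
  rw [show (T3 c) = c.support ×ˢ c.support ×ˢ c.support from rfl]
  simp only [Finset.sum_product]
  unfold circleEvol
  rw [pow_succ, sq, Finset.sum_mul_sum, Finset.sum_mul]
  refine Finset.sum_congr rfl fun k1 _ => ?_
  rw [Finset.sum_mul]
  refine Finset.sum_congr rfl fun k2 _ => ?_
  rw [Finset.mul_sum]
  refine Finset.sum_congr rfl fun k3 _ => ?_
  rw [mul3]
  unfold AA CC PP QQ
  congr 1
  · congr 1
    · congr 1
      push_cast
      ring
  · congr 1
    push_cast
    ring

lemma norm_pow_six (z : ℂ) : (‖z‖ : ℝ) ^ (6:ℕ) = ((z^3) * (starRingEnd ℂ) (z^3)).re := by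
  rw [Complex.mul_conj]
  calc ‖z‖ ^ (6:ℕ) = (‖z‖ ^ (3:ℕ)) ^ (2:ℕ) := by ring
    _ = ‖z ^ 3‖ ^ (2:ℕ) := by rw [norm_pow]
    _ = Complex.normSq (z ^ 3) := by
        rw [Complex.sq_norm]
    _ = (((Complex.normSq (z ^ 3) : ℝ)) : ℂ).re := by rw [Complex.ofReal_re]

lemma inner_repr (c : ℤ →₀ ℂ) (t : ℝ) :
    ∫ x in Set.Icc (0:ℝ) (2*Real.pi), ‖circleEvol c t x‖ ^ (6:ℕ)
    = (2*Real.pi) * (WW c t).re := by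
  classical
  have hcont : ∀ a b : ℤ × ℤ × ℤ,
      Continuous fun x : ℝ => AA c a t x * (starRingEnd ℂ) (AA c b t x) := by
    intro a b
    have h1 : Continuous fun x : ℝ => AA c a t x := by unfold AA; fun_prop
    have h2 : Continuous fun x : ℝ => AA c b t x := by unfold AA; fun_prop
    exact h1.mul (RCLike.continuous_conj.comp h2)
  have hpt : ∀ x : ℝ, (‖circleEvol c t x‖ ^ (6:ℕ) : ℝ)
      = (∑ a ∈ T3 c, ∑ b ∈ T3 c, AA c a t x * (starRingEnd ℂ) (AA c b t x)).re := by
    intro x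
    rw [norm_pow_six, cube, map_sum, Finset.sum_mul_sum]
  have hint : ∀ a ∈ T3 c, IntegrableOn
      (fun x : ℝ => ∑ b ∈ T3 c, AA c a t x * (starRingEnd ℂ) (AA c b t x))
      (Set.Icc (0:ℝ) (2*Real.pi)) := by
    intro a _
    exact (continuous_finset_sum _ fun b _ => hcont a b).integrableOn_Icc
  calc ∫ x in Set.Icc (0:ℝ) (2*Real.pi), ‖circleEvol c t x‖ ^ (6:ℕ)
      = ∫ x in Set.Icc (0:ℝ) (2*Real.pi),
          (∑ a ∈ T3 c, ∑ b ∈ T3 c, AA c a t x * (starRingEnd ℂ) (AA c b t x)).re := by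
        refine setIntegral_congr_fun measurableSet_Icc fun x _ => hpt x
    _ = (∫ x in Set.Icc (0:ℝ) (2*Real.pi),
          ∑ a ∈ T3 c, ∑ b ∈ T3 c, AA c a t x * (starRingEnd ℂ) (AA c b t x)).re := by
        have hcI : MeasureTheory.IntegrableOn
            (fun x : ℝ => ∑ a ∈ T3 c, ∑ b ∈ T3 c, AA c a t x * (starRingEnd ℂ) (AA c b t x))
            (Set.Icc (0:ℝ) (2*Real.pi)) :=
          (continuous_finset_sum _ fun a _ =>
            continuous_finset_sum _ fun b _ => hcont a b).integrableOn_Icc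
        exact re_setIntegral hcI
    _ = (∑ a ∈ T3 c, ∑ b ∈ T3 c, ∫ x in Set.Icc (0:ℝ) (2*Real.pi),
          AA c a t x * (starRingEnd ℂ) (AA c b t x)).re := by
        rw [integral_finset_sum _ hint]
        congr 1
        refine Finset.sum_congr rfl fun a _ => ?_
        rw [integral_finset_sum _ (fun b _ => (hcont a b).integrableOn_Icc)]
    _ = (∑ a ∈ T3 c, ∑ b ∈ T3 c,
          if QQ a = QQ b then ((2*Real.pi:ℝ):ℂ) *
            (Complex.exp (Complex.I*(t:ℂ)*((PP a - PP b : ℤ):ℂ)) *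
              (CC c a * (starRingEnd ℂ) (CC c b)))
          else 0).re := by
        congr 1
        refine Finset.sum_congr rfl fun a _ => ?_
        refine Finset.sum_congr rfl fun b _ => ?_
        have : ∀ x : ℝ, AA c a t x * (starRingEnd ℂ) (AA c b t x)
            = (Complex.exp (Complex.I*(t:ℂ)*((PP a - PP b : ℤ):ℂ)) *
                (CC c a * (starRingEnd ℂ) (CC c b))) *
              Complex.exp ((Complex.I*((QQ a - QQ b : ℤ):ℂ)) * (x:ℂ)) := by
          intro x
          unfold AA
          rw [term_mul]
        simp_rw [this]
        rw [MeasureTheory.integral_const_mul, exp_integral_Icc]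
        by_cases h : QQ a = QQ b
        · have h0 : QQ a - QQ b = 0 := by omega
          rw [if_pos h0, if_pos h]
          ring
        · have h0 : ¬ (QQ a - QQ b = 0) := by omega
          rw [if_neg h0, if_neg h, mul_zero]
    _ = (2*Real.pi) * (WW c t).re := by
        have hpull : (∑ a ∈ T3 c, ∑ b ∈ T3 c,
            if QQ a = QQ b then ((2*Real.pi:ℝ):ℂ) *
              (Complex.exp (Complex.I*(t:ℂ)*((PP a - PP b : ℤ):ℂ)) *
                (CC c a * (starRingEnd ℂ) (CC c b)))
            else 0) = ((2*Real.pi:ℝ):ℂ) * WW c t := by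
          unfold WW
          rw [Finset.mul_sum]
          refine Finset.sum_congr rfl fun a _ => ?_
          rw [Finset.mul_sum]
          refine Finset.sum_congr rfl fun b _ => ?_
          split_ifs <;> simp
        rw [hpull, Complex.re_ofReal_mul]

end SA

namespace SA
open MeasureTheory Finset Complex

lemma continuous_WW (c : ℤ →₀ ℂ) : Continuous fun t : ℝ => WW c t := by
  unfold WW
  refine continuous_finset_sum _ fun a _ => continuous_finset_sum _ fun b _ => ?_
  by_cases h : QQ a = QQ b
  · simp only [if_pos h]
    fun_prop
  · simp only [if_neg h]
    exact continuous_const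

lemma outer_repr (c : ℤ →₀ ℂ) :
    ∫ t in Set.Ioc (0:ℝ) (2*Real.pi), (2*Real.pi) * (WW c t).re
    = (2*Real.pi)^2 * (∑ a ∈ T3 c, ∑ b ∈ T3 c,
        if keyF a = keyF b then CC c a * (starRingEnd ℂ) (CC c b) else 0).re := by
  classical
  have hterm : ∀ a b : ℤ × ℤ × ℤ,
      (∫ t in Set.Ioc (0:ℝ) (2*Real.pi),
        (if QQ a = QQ b then
          Complex.exp (Complex.I * (t:ℂ) * ((PP a - PP b : ℤ):ℂ)) *
            (CC c a * (starRingEnd ℂ) (CC c b))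
        else 0))
      = if keyF a = keyF b then ((2*Real.pi:ℝ):ℂ) * (CC c a * (starRingEnd ℂ) (CC c b))
        else 0 := by
    intro a b
    by_cases h : QQ a = QQ b
    · simp only [if_pos h]
      have hre : ∀ t : ℝ, Complex.exp (Complex.I * (t:ℂ) * ((PP a - PP b : ℤ):ℂ)) *
          (CC c a * (starRingEnd ℂ) (CC c b))
          = Complex.exp ((Complex.I * ((PP a - PP b : ℤ):ℂ)) * (t:ℂ)) *
            (CC c a * (starRingEnd ℂ) (CC c b)) := by
        intro t; ring_nf
      simp_rw [hre]
      rw [MeasureTheory.integral_mul_const, exp_integral_Ioc]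
      by_cases h2 : PP a = PP b
      · have hd : PP a - PP b = 0 := by omega
        have hk : keyF a = keyF b := by
          unfold keyF; rw [h, h2]
        rw [if_pos hd, if_pos hk]
      · have hd : ¬ (PP a - PP b = 0) := by omega
        have hk : ¬ (keyF a = keyF b) := by
          unfold keyF; simp [h2]
        rw [if_neg hd, if_neg hk, zero_mul]
    · simp only [if_neg h, integral_zero]
      have hk : ¬ (keyF a = keyF b) := by
        unfold keyF; simp [h]
      rw [if_neg hk]
  have hint : ∀ a b : ℤ × ℤ × ℤ, IntegrableOn
      (fun t : ℝ => (if QQ a = QQ b then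
          Complex.exp (Complex.I * (t:ℂ) * ((PP a - PP b : ℤ):ℂ)) *
            (CC c a * (starRingEnd ℂ) (CC c b))
        else 0)) (Set.Ioc (0:ℝ) (2*Real.pi)) := by
    intro a b
    by_cases h : QQ a = QQ b
    · simp only [if_pos h]
      exact (Continuous.integrableOn_Ioc (by fun_prop))
    · simp only [if_neg h]
      exact (Continuous.integrableOn_Ioc continuous_const)
  rw [MeasureTheory.integral_const_mul]
  have hWint : IntegrableOn (fun t : ℝ => WW c t) (Set.Ioc (0:ℝ) (2*Real.pi)) :=
    (continuous_WW c).integrableOn_Ioc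
  rw [re_setIntegral hWint]
  have hsum : (∫ t in Set.Ioc (0:ℝ) (2*Real.pi), WW c t)
      = ∑ a ∈ T3 c, ∑ b ∈ T3 c,
          if keyF a = keyF b then ((2*Real.pi:ℝ):ℂ) * (CC c a * (starRingEnd ℂ) (CC c b))
          else 0 := by
    unfold WW
    rw [integral_finset_sum _ (fun a _ => integrable_finset_sum _ (fun b _ => hint a b))]
    refine Finset.sum_congr rfl fun a _ => ?_
    rw [integral_finset_sum _ (fun b _ => hint a b)]
    exact Finset.sum_congr rfl fun b _ => hterm a b
  rw [hsum]
  have hpull : (∑ a ∈ T3 c, ∑ b ∈ T3 c,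
      if keyF a = keyF b then ((2*Real.pi:ℝ):ℂ) * (CC c a * (starRingEnd ℂ) (CC c b))
      else 0)
      = ((2*Real.pi:ℝ):ℂ) * ∑ a ∈ T3 c, ∑ b ∈ T3 c,
          if keyF a = keyF b then CC c a * (starRingEnd ℂ) (CC c b) else 0 := by
    rw [Finset.mul_sum]
    refine Finset.sum_congr rfl fun a _ => ?_
    rw [Finset.mul_sum]
    refine Finset.sum_congr rfl fun b _ => ?_
    split_ifs <;> simp
  rw [hpull, Complex.re_ofReal_mul]
  ring

lemma group_re (c : ℤ →₀ ℂ) :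
    (∑ a ∈ T3 c, ∑ b ∈ T3 c,
        if keyF a = keyF b then CC c a * (starRingEnd ℂ) (CC c b) else 0).re
    = ∑ κ ∈ (T3 c).image keyF, Complex.normSq (TK c κ) := by
  classical
  have h1 : ∀ a, (∑ b ∈ T3 c, if keyF a = keyF b then CC c a * (starRingEnd ℂ) (CC c b) else 0)
      = CC c a * (starRingEnd ℂ) (TK c (keyF a)) := by
    intro a
    unfold TK
    rw [Finset.sum_filter, map_sum, Finset.mul_sum]
    refine Finset.sum_congr rfl fun b _ => ?_
    rcases eq_or_ne (keyF a) (keyF b) with h | h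
    · rw [if_pos h, if_pos h.symm]
    · rw [if_neg h, if_neg (Ne.symm h)]
      simp
  have h2 : (∑ a ∈ T3 c, ∑ b ∈ T3 c,
      if keyF a = keyF b then CC c a * (starRingEnd ℂ) (CC c b) else 0)
      = ∑ κ ∈ (T3 c).image keyF, TK c κ * (starRingEnd ℂ) (TK c κ) := by
    calc (∑ a ∈ T3 c, ∑ b ∈ T3 c,
        if keyF a = keyF b then CC c a * (starRingEnd ℂ) (CC c b) else 0)
        = ∑ a ∈ T3 c, CC c a * (starRingEnd ℂ) (TK c (keyF a)) :=
          Finset.sum_congr rfl fun a _ => h1 a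
      _ = ∑ a ∈ (T3 c).filter (fun a => keyF a ∈ (T3 c).image keyF),
            CC c a * (starRingEnd ℂ) (TK c (keyF a)) := by
          rw [Finset.filter_true_of_mem (fun a ha => Finset.mem_image_of_mem keyF ha)]
      _ = ∑ κ ∈ (T3 c).image keyF, ∑ a ∈ (T3 c).filter (fun a => keyF a = κ),
            CC c a * (starRingEnd ℂ) (TK c (keyF a)) :=
          (Finset.sum_fiberwise_eq_sum_filter _ _ _ _).symm
      _ = ∑ κ ∈ (T3 c).image keyF, TK c κ * (starRingEnd ℂ) (TK c κ) := by
          refine Finset.sum_congr rfl fun κ _ => ?_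
          have : ∀ a ∈ (T3 c).filter (fun a => keyF a = κ),
              CC c a * (starRingEnd ℂ) (TK c (keyF a))
              = CC c a * (starRingEnd ℂ) (TK c κ) := by
            intro a ha
            rw [(Finset.mem_filter.mp ha).2]
          rw [Finset.sum_congr rfl this, ← Finset.sum_mul]
          rfl
  rw [h2, Complex.re_sum]
  refine Finset.sum_congr rfl fun κ _ => ?_
  rw [Complex.mul_conj, Complex.ofReal_re]

lemma double_integral_eq (c : ℤ →₀ ℂ) :
    ∫ t in Set.Ioc (0:ℝ) (2*Real.pi), ∫ x in Set.Icc (0:ℝ) (2*Real.pi),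
        ‖circleEvol c t x‖ ^ (6:ℕ)
    = (2*Real.pi)^2 * ∑ κ ∈ (T3 c).image keyF, Complex.normSq (TK c κ) := by
  calc ∫ t in Set.Ioc (0:ℝ) (2*Real.pi), ∫ x in Set.Icc (0:ℝ) (2*Real.pi),
        ‖circleEvol c t x‖ ^ (6:ℕ)
      = ∫ t in Set.Ioc (0:ℝ) (2*Real.pi), (2*Real.pi) * (WW c t).re := by
        exact setIntegral_congr_fun measurableSet_Ioc fun t _ => inner_repr c t
    _ = (2*Real.pi)^2 * (∑ a ∈ T3 c, ∑ b ∈ T3 c,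
          if keyF a = keyF b then CC c a * (starRingEnd ℂ) (CC c b) else 0).re :=
        outer_repr c
    _ = (2*Real.pi)^2 * ∑ κ ∈ (T3 c).image keyF, Complex.normSq (TK c κ) := by
        rw [group_re]

lemma integrableOn_inner (c : ℤ →₀ ℂ) :
    IntegrableOn (fun t => ∫ x in Set.Icc (0:ℝ) (2*Real.pi), ‖circleEvol c t x‖ ^ (6:ℕ))
      (Set.Ioc (0:ℝ) (2*Real.pi)) := by
  have heq : (fun t => ∫ x in Set.Icc (0:ℝ) (2*Real.pi), ‖circleEvol c t x‖ ^ (6:ℕ))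
      = fun t => (2*Real.pi) * (WW c t).re := funext fun t => inner_repr c t
  rw [heq]
  exact (continuous_const.mul (Complex.continuous_re.comp (continuous_WW c))).integrableOn_Ioc

lemma step_mono (c : ℤ →₀ ℂ) :
    ∫ t in Set.Ioc (0:ℝ) 1, ∫ x in Set.Icc (0:ℝ) (2*Real.pi), ‖circleEvol c t x‖ ^ (6:ℕ)
    ≤ ∫ t in Set.Ioc (0:ℝ) (2*Real.pi), ∫ x in Set.Icc (0:ℝ) (2*Real.pi),
        ‖circleEvol c t x‖ ^ (6:ℕ) := by
  refine MeasureTheory.setIntegral_mono_set (integrableOn_inner c) ?_ ?_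
  · filter_upwards with t
    exact integral_nonneg fun x => by positivity
  · refine HasSubset.Subset.eventuallyLE (Set.Ioc_subset_Ioc_right ?_)
    nlinarith [Real.pi_gt_three]

end SA

namespace SA
open MeasureTheory Finset Complex

noncomputable def wt (s : ℝ) (k : ℤ) : ℝ := (1 + (k:ℝ)^2) ^ s
noncomputable def Wt (s : ℝ) (a : ℤ × ℤ × ℤ) : ℝ := wt s a.1 * wt s a.2.1 * wt s a.2.2

lemma one_le_wt {s : ℝ} (hs : 0 ≤ s) (k : ℤ) : 1 ≤ wt s k :=
  Real.one_le_rpow (by nlinarith [sq_nonneg ((k:ℝ))]) hs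

lemma wt_pos {s : ℝ} (hs : 0 ≤ s) (k : ℤ) : 0 < wt s k := lt_of_lt_of_le one_pos (one_le_wt hs k)

lemma Wt_pos {s : ℝ} (hs : 0 ≤ s) (a : ℤ × ℤ × ℤ) : 0 < Wt s a := by
  unfold Wt
  have := wt_pos hs a.1; have := wt_pos hs a.2.1; have := wt_pos hs a.2.2
  positivity

lemma le_mul3 {B x y z : ℝ} (hx : 1 ≤ x) (hy : 1 ≤ y) (hz : 1 ≤ z)
    (h : B ≤ x ∨ B ≤ y ∨ B ≤ z) : B ≤ x * y * z := by
  rcases h with h | h | h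
  · calc B ≤ x := h
      _ ≤ x * (y * z) := le_mul_of_one_le_right (by linarith) (by nlinarith)
      _ = x * y * z := by ring
  · calc B ≤ y := h
      _ ≤ y * (x * z) := le_mul_of_one_le_right (by linarith) (by nlinarith)
      _ = x * y * z := by ring
  · calc B ≤ z := h
      _ ≤ z * (x * y) := le_mul_of_one_le_right (by linarith) (by nlinarith)
      _ = x * y * z := by ring

/-- The key counting estimate: uniform bound on fiber sums of inverse weights. -/
lemma fiber_sum_inv_le (s : ℝ) (hs : 0 < s) :
    ∃ A : ℝ, 0 < A ∧ ∀ c : ℤ →₀ ℂ, ∀ κ ∈ (T3 c).image keyF,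
      ∑ a ∈ (T3 c).filter (fun a => keyF a = κ), (Wt s a)⁻¹ ≤ A := by
  classical
  obtain ⟨C, hC1, hC⟩ := Eis.count_bound (s/2) (by positivity)
  refine ⟨C * 5 ^ (s/2), by positivity, ?_⟩
  intro c κ hκ
  obtain ⟨a₀, ha₀T, ha₀key⟩ := Finset.mem_image.mp hκ
  set n : ℤ := QQ a₀ with hn_def
  set m : ℤ := PP a₀ with hm_def
  have hm0 : (0:ℤ) ≤ m := by
    rw [hm_def]; unfold PP; positivity
  have hmR : (1:ℝ) ≤ 1 + (m:ℝ)/3 := by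
    have : (0:ℝ) ≤ (m:ℝ) := by exact_mod_cast hm0
    linarith
  have hbase_pos : (0:ℝ) < 1 + (m:ℝ)/3 := by linarith
  set fib := (T3 c).filter (fun a => keyF a = κ) with hfib_def
  have hkey : ∀ a ∈ fib, QQ a = n ∧ PP a = m := by
    intro a ha
    have h := (Finset.mem_filter.mp ha).2
    rw [← ha₀key] at h
    unfold keyF at h
    exact ⟨congrArg Prod.fst h, congrArg Prod.snd h⟩
  -- pointwise inverse bound
  have hinv : ∀ a ∈ fib, (Wt s a)⁻¹ ≤ (1 + (m:ℝ)/3) ^ (-s) := by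
    intro a ha
    obtain ⟨hQ, hP⟩ := hkey a ha
    have hcase : (m:ℝ)/3 ≤ ((a.1:ℝ))^2 ∨ (m:ℝ)/3 ≤ ((a.2.1:ℝ))^2 ∨ (m:ℝ)/3 ≤ ((a.2.2:ℝ))^2 := by
      by_contra hcon
      push_neg at hcon
      obtain ⟨h1, h2, h3⟩ := hcon
      have hmval : (m:ℝ) = ((a.1:ℝ))^2 + ((a.2.1:ℝ))^2 + ((a.2.2:ℝ))^2 := by
        rw [← hP]; unfold PP; push_cast; ring
      linarith
    have hW : (1 + (m:ℝ)/3) ^ s ≤ Wt s a := by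
      unfold Wt
      refine le_mul3 (one_le_wt hs.le _) (one_le_wt hs.le _) (one_le_wt hs.le _) ?_
      rcases hcase with h | h | h
      · left; unfold wt
        exact Real.rpow_le_rpow hbase_pos.le (by linarith) hs.le
      · right; left; unfold wt
        exact Real.rpow_le_rpow hbase_pos.le (by linarith) hs.le
      · right; right; unfold wt
        exact Real.rpow_le_rpow hbase_pos.le (by linarith) hs.le
    rw [Real.rpow_neg hbase_pos.le]
    exact inv_anti₀ (Real.rpow_pos_of_pos hbase_pos s) hW
  -- cardinality bound via Eisenstein integers
  set emb : (ℤ × ℤ × ℤ) → Eis := fun a => ⟨a.1 - a.2.1, a.2.1 - a.2.2⟩ with hemb_def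
  have hinj : Set.InjOn emb fib := by
    intro a ha b hb hab
    have h1 : a.1 - a.2.1 = b.1 - b.2.1 := congrArg Eis.re hab
    have h2 : a.2.1 - a.2.2 = b.2.1 - b.2.2 := congrArg Eis.im hab
    have hQa := (hkey a ha).1
    have hQb := (hkey b hb).1
    unfold QQ at hQa hQb
    have e1 : a.1 = b.1 := by omega
    have e2 : a.2.1 = b.2.1 := by omega
    have e3 : a.2.2 = b.2.2 := by omega
    exact Prod.ext e1 (Prod.ext e2 e3)
  set F : Finset Eis := fib.image emb with hF_def
  have hcardeq : (fib.card : ℝ) = (F.card : ℝ) := by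
    rw [hF_def, Finset.card_image_of_injOn hinj]
  have hnormval : ∀ a ∈ fib, 2 * Eis.norm (emb a) = 3 * m - n ^ 2 := by
    intro a ha
    obtain ⟨hQ, hP⟩ := hkey a ha
    rw [← hQ, ← hP]
    unfold QQ PP
    show 2 * ((a.1 - a.2.1) * (a.1 - a.2.1) + (a.1 - a.2.1) * (a.2.1 - a.2.2)
      + (a.2.1 - a.2.2) * (a.2.1 - a.2.2)) = _
    ring
  set M0 : ℕ := Eis.natNorm (emb a₀) with hM0_def
  have ha₀fib : a₀ ∈ fib := by
    rw [hfib_def]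
    exact Finset.mem_filter.mpr ⟨ha₀T, ha₀key⟩
  have hFnorm : ∀ z ∈ F, Eis.natNorm z = M0 := by
    intro z hz
    obtain ⟨a, ha, rfl⟩ := Finset.mem_image.mp hz
    have h1 := hnormval a ha
    have h2 := hnormval a₀ ha₀fib
    have h3 := Eis.natCast_natNorm (emb a)
    have h4 := Eis.natCast_natNorm (emb a₀)
    rw [hM0_def]
    omega
  -- total
  have hsum_le : ∑ a ∈ fib, (Wt s a)⁻¹ ≤ (fib.card : ℝ) * (1 + (m:ℝ)/3) ^ (-s) := by
    calc ∑ a ∈ fib, (Wt s a)⁻¹ ≤ ∑ _a ∈ fib, (1 + (m:ℝ)/3) ^ (-s) :=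
        Finset.sum_le_sum hinv
      _ = (fib.card : ℝ) * (1 + (m:ℝ)/3) ^ (-s) := by
        rw [Finset.sum_const, nsmul_eq_mul]
  have hneg_le_one : (1 + (m:ℝ)/3) ^ (-s) ≤ 1 :=
    Real.rpow_le_one_of_one_le_of_nonpos hmR (by linarith)
  have hneg_pos : (0:ℝ) < (1 + (m:ℝ)/3) ^ (-s) := Real.rpow_pos_of_pos hbase_pos _
  by_cases hM0z : M0 = 0
  · -- all elements of F are zero
    have hF1 : F.card ≤ 1 := by
      refine Finset.card_le_one.mpr ?_
      intro z hz w hw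
      have h1 := hFnorm z hz
      have h2 := hFnorm w hw
      rw [hM0z] at h1 h2
      rw [Eis.natNorm_eq_zero_iff.mp h1, Eis.natNorm_eq_zero_iff.mp h2]
    have : (fib.card : ℝ) ≤ 1 := by
      rw [hcardeq]; exact_mod_cast hF1
    calc ∑ a ∈ fib, (Wt s a)⁻¹ ≤ (fib.card : ℝ) * (1 + (m:ℝ)/3) ^ (-s) := hsum_le
      _ ≤ 1 * 1 := by
        refine mul_le_mul this hneg_le_one hneg_pos.le one_pos.le
      _ ≤ C * 5 ^ (s/2) := by
        have h5 : (1:ℝ) ≤ (5:ℝ) ^ (s/2) := Real.one_le_rpow (by norm_num) (by positivity)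
        nlinarith
  · have hcard := hC M0 hM0z F hFnorm
    -- M0 ≤ 5 * (1 + m/3)
    have hM0le : (M0 : ℝ) ≤ 5 * (1 + (m:ℝ)/3) := by
      have h1 := hnormval a₀ ha₀fib
      have h2 := Eis.natCast_natNorm (emb a₀)
      have h3 : 2 * (M0 : ℤ) ≤ 3 * m := by
        rw [hM0_def, h2, h1]
        nlinarith [sq_nonneg n]
      have h4 : (M0 : ℝ) ≤ 3 * (m:ℝ) / 2 := by
        have : (2 * (M0:ℤ) : ℝ) ≤ (3 * m : ℝ) := by exact_mod_cast h3
        push_cast at this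
        linarith
      have hm0R : (0:ℝ) ≤ (m:ℝ) := by exact_mod_cast hm0
      linarith
    have hM0pow : (M0 : ℝ) ^ (s/2) ≤ 5 ^ (s/2) * (1 + (m:ℝ)/3) ^ (s/2) := by
      calc (M0 : ℝ) ^ (s/2) ≤ (5 * (1 + (m:ℝ)/3)) ^ (s/2) :=
          Real.rpow_le_rpow (by positivity) hM0le (by positivity)
        _ = 5 ^ (s/2) * (1 + (m:ℝ)/3) ^ (s/2) :=
          Real.mul_rpow (by norm_num) hbase_pos.le
    calc ∑ a ∈ fib, (Wt s a)⁻¹ ≤ (fib.card : ℝ) * (1 + (m:ℝ)/3) ^ (-s) := hsum_le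
      _ ≤ (C * (M0:ℝ) ^ (s/2)) * (1 + (m:ℝ)/3) ^ (-s) := by
        refine mul_le_mul_of_nonneg_right ?_ hneg_pos.le
        rw [hcardeq]
        exact hcard
      _ ≤ (C * (5 ^ (s/2) * (1 + (m:ℝ)/3) ^ (s/2))) * (1 + (m:ℝ)/3) ^ (-s) := by
        refine mul_le_mul_of_nonneg_right ?_ hneg_pos.le
        exact mul_le_mul_of_nonneg_left hM0pow (by linarith)
      _ = (C * 5 ^ (s/2)) * ((1 + (m:ℝ)/3) ^ (s/2) * (1 + (m:ℝ)/3) ^ (-s)) := by ring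
      _ ≤ (C * 5 ^ (s/2)) * 1 := by
        refine mul_le_mul_of_nonneg_left ?_ (by positivity)
        rw [← Real.rpow_add hbase_pos]
        refine Real.rpow_le_one_of_one_le_of_nonpos hmR (by linarith)
      _ = C * 5 ^ (s/2) := by ring

lemma cs_bound (s : ℝ) (hs : 0 < s) (c : ℤ →₀ ℂ) (κ : ℤ × ℤ) :
    Complex.normSq (TK c κ)
    ≤ (∑ a ∈ (T3 c).filter (fun a => keyF a = κ), (Wt s a)⁻¹)
      * (∑ a ∈ (T3 c).filter (fun a => keyF a = κ), Wt s a * ‖CC c a‖ ^ 2) := by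
  classical
  set fib := (T3 c).filter (fun a => keyF a = κ)
  have h1 : Complex.normSq (TK c κ) = ‖TK c κ‖ ^ 2 := by
    rw [Complex.sq_norm]
  have h2 : ‖TK c κ‖ ≤ ∑ a ∈ fib, ‖CC c a‖ := norm_sum_le _ _
  have h3 : ‖TK c κ‖ ^ 2 ≤ (∑ a ∈ fib, ‖CC c a‖) ^ 2 := by
    refine pow_le_pow_left₀ (norm_nonneg _) h2 2
  have h4 : (∑ a ∈ fib, ‖CC c a‖) ^ 2
      ≤ (∑ a ∈ fib, Real.sqrt ((Wt s a)⁻¹) ^ 2) * (∑ a ∈ fib, (Real.sqrt (Wt s a) * ‖CC c a‖) ^ 2) := by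
    have := Finset.sum_mul_sq_le_sq_mul_sq fib
      (fun a => Real.sqrt ((Wt s a)⁻¹)) (fun a => Real.sqrt (Wt s a) * ‖CC c a‖)
    have heq : ∀ a ∈ fib, Real.sqrt ((Wt s a)⁻¹) * (Real.sqrt (Wt s a) * ‖CC c a‖) = ‖CC c a‖ := by
      intro a _
      have hW := Wt_pos hs.le a
      rw [Real.sqrt_inv]
      rw [show (Real.sqrt (Wt s a))⁻¹ * (Real.sqrt (Wt s a) * ‖CC c a‖)
        = ((Real.sqrt (Wt s a))⁻¹ * Real.sqrt (Wt s a)) * ‖CC c a‖ by ring]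
      rw [inv_mul_cancel₀ (by positivity)]
      ring
    rw [Finset.sum_congr rfl heq] at this
    exact this
  have h5 : ∑ a ∈ fib, Real.sqrt ((Wt s a)⁻¹) ^ 2 = ∑ a ∈ fib, (Wt s a)⁻¹ := by
    refine Finset.sum_congr rfl fun a _ => ?_
    rw [Real.sq_sqrt (inv_nonneg.mpr (Wt_pos hs.le a).le)]
  have h6 : ∑ a ∈ fib, (Real.sqrt (Wt s a) * ‖CC c a‖) ^ 2 = ∑ a ∈ fib, Wt s a * ‖CC c a‖ ^ 2 := by
    refine Finset.sum_congr rfl fun a _ => ?_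
    rw [mul_pow, Real.sq_sqrt (Wt_pos hs.le a).le]
  calc Complex.normSq (TK c κ) = ‖TK c κ‖ ^ 2 := h1
    _ ≤ (∑ a ∈ fib, ‖CC c a‖) ^ 2 := h3
    _ ≤ (∑ a ∈ fib, Real.sqrt ((Wt s a)⁻¹) ^ 2)
        * (∑ a ∈ fib, (Real.sqrt (Wt s a) * ‖CC c a‖) ^ 2) := h4
    _ = (∑ a ∈ fib, (Wt s a)⁻¹) * (∑ a ∈ fib, Wt s a * ‖CC c a‖ ^ 2) := by rw [h5, h6]

lemma weighted_total (s : ℝ) (c : ℤ →₀ ℂ) :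
    ∑ κ ∈ (T3 c).image keyF, ∑ a ∈ (T3 c).filter (fun a => keyF a = κ), Wt s a * ‖CC c a‖ ^ 2
    = (∑ k ∈ c.support, wt s k * ‖c k‖ ^ 2) ^ 3 := by
  classical
  have h1 : ∑ κ ∈ (T3 c).image keyF, ∑ a ∈ (T3 c).filter (fun a => keyF a = κ),
      Wt s a * ‖CC c a‖ ^ 2 = ∑ a ∈ T3 c, Wt s a * ‖CC c a‖ ^ 2 := by
    rw [Finset.sum_fiberwise_eq_sum_filter]
    rw [Finset.filter_true_of_mem (fun a ha => Finset.mem_image_of_mem keyF ha)]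
  rw [h1]
  rw [show (T3 c) = c.support ×ˢ c.support ×ˢ c.support from rfl]
  simp only [Finset.sum_product]
  rw [pow_succ, sq, Finset.sum_mul_sum, Finset.sum_mul]
  refine Finset.sum_congr rfl fun k1 _ => ?_
  rw [Finset.sum_mul]
  refine Finset.sum_congr rfl fun k2 _ => ?_
  rw [Finset.mul_sum]
  refine Finset.sum_congr rfl fun k3 _ => ?_
  unfold Wt CC
  rw [norm_mul, norm_mul]
  ring

end SA

/-- Strichartz estimate on the circle, `L⁶` version (Lemma 6.2, after Bourgain): for every
`s > 0` there is `C = C(s)` with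
`‖u‖_{L⁶((0,1]×[0,2π])} ≤ C (∑ₖ (1+k²)^s |cₖ|²)^{1/2}`. -/
theorem strichartz_L6_circle (s : ℝ) (hs : 0 < s) :
    ∃ C : ℝ, 0 < C ∧ ∀ c : ℤ →₀ ℂ,
      (∫ t in Set.Ioc (0 : ℝ) 1, ∫ x in Set.Icc (0 : ℝ) (2 * Real.pi),
          ‖circleEvol c t x‖ ^ (6 : ℕ)) ^ ((1 : ℝ) / 6)
        ≤ C * (∑ k ∈ c.support, (1 + (k : ℝ) ^ 2) ^ s * ‖c k‖ ^ 2) ^ ((1 : ℝ) / 2) := by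
  classical
  obtain ⟨A, hA, hAb⟩ := SA.fiber_sum_inv_le s hs
  refine ⟨((2*Real.pi)^2 * A) ^ ((1:ℝ)/6), by positivity, ?_⟩
  intro c
  set X := ∑ k ∈ c.support, (1 + (k:ℝ)^2) ^ s * ‖c k‖ ^ 2 with hX_def
  have hX0 : 0 ≤ X := by
    rw [hX_def]
    refine Finset.sum_nonneg fun k _ => ?_
    positivity
  have hfibsum_nonneg : ∀ κ : ℤ × ℤ,
      0 ≤ ∑ a ∈ (SA.T3 c).filter (fun a => SA.keyF a = κ), SA.Wt s a * ‖SA.CC c a‖ ^ 2 := by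
    intro κ
    refine Finset.sum_nonneg fun a _ => ?_
    have := SA.Wt_pos hs.le a
    positivity
  have hsum_le : ∑ κ ∈ (SA.T3 c).image SA.keyF, Complex.normSq (SA.TK c κ) ≤ A * X ^ 3 := by
    calc ∑ κ ∈ (SA.T3 c).image SA.keyF, Complex.normSq (SA.TK c κ)
        ≤ ∑ κ ∈ (SA.T3 c).image SA.keyF,
            A * (∑ a ∈ (SA.T3 c).filter (fun a => SA.keyF a = κ), SA.Wt s a * ‖SA.CC c a‖ ^ 2) := by
          refine Finset.sum_le_sum fun κ hκ => ?_
          refine (SA.cs_bound s hs c κ).trans ?_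
          exact mul_le_mul_of_nonneg_right (hAb c κ hκ) (hfibsum_nonneg κ)
      _ = A * ∑ κ ∈ (SA.T3 c).image SA.keyF,
            ∑ a ∈ (SA.T3 c).filter (fun a => SA.keyF a = κ), SA.Wt s a * ‖SA.CC c a‖ ^ 2 := by
          rw [Finset.mul_sum]
      _ = A * X ^ 3 := by
          rw [SA.weighted_total s c, hX_def]
          rfl
  have hIle : (∫ t in Set.Ioc (0 : ℝ) 1, ∫ x in Set.Icc (0 : ℝ) (2 * Real.pi),
      ‖circleEvol c t x‖ ^ (6 : ℕ)) ≤ ((2*Real.pi)^2 * A) * X ^ 3 := by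
    calc (∫ t in Set.Ioc (0 : ℝ) 1, ∫ x in Set.Icc (0 : ℝ) (2 * Real.pi),
        ‖circleEvol c t x‖ ^ (6 : ℕ))
        ≤ ∫ t in Set.Ioc (0 : ℝ) (2*Real.pi), ∫ x in Set.Icc (0 : ℝ) (2 * Real.pi),
            ‖circleEvol c t x‖ ^ (6 : ℕ) := SA.step_mono c
      _ = (2*Real.pi)^2 * ∑ κ ∈ (SA.T3 c).image SA.keyF, Complex.normSq (SA.TK c κ) :=
          SA.double_integral_eq c
      _ ≤ (2*Real.pi)^2 * (A * X ^ 3) := by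
          refine mul_le_mul_of_nonneg_left hsum_le (by positivity)
      _ = ((2*Real.pi)^2 * A) * X ^ 3 := by ring
  have hI0 : 0 ≤ ∫ t in Set.Ioc (0 : ℝ) 1, ∫ x in Set.Icc (0 : ℝ) (2 * Real.pi),
      ‖circleEvol c t x‖ ^ (6 : ℕ) := by
    refine setIntegral_nonneg measurableSet_Ioc fun t _ => ?_
    refine integral_nonneg fun x => ?_
    positivity
  calc (∫ t in Set.Ioc (0 : ℝ) 1, ∫ x in Set.Icc (0 : ℝ) (2 * Real.pi),
      ‖circleEvol c t x‖ ^ (6 : ℕ)) ^ ((1:ℝ)/6)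
      ≤ (((2*Real.pi)^2 * A) * X ^ 3) ^ ((1:ℝ)/6) :=
        Real.rpow_le_rpow hI0 hIle (by norm_num)
    _ = ((2*Real.pi)^2 * A) ^ ((1:ℝ)/6) * (X ^ 3) ^ ((1:ℝ)/6) :=
        Real.mul_rpow (by positivity) (by positivity)
    _ = ((2*Real.pi)^2 * A) ^ ((1:ℝ)/6) * X ^ ((1:ℝ)/2) := by
        rw [← Real.rpow_natCast X 3, ← Real.rpow_mul hX0]
        norm_num
end
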